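/- arXiv:2105.04852 — 3 statements merged into one kernel-verified Lean document; each statement's English description precedes it below -/
import Mathlib

section
/- Let 1 ≤ p < ∞ and q ≥ 0. There exists a constant c > 0, depending only on p and q, such that for all L, M > 0 and every integer n ≥ 1, the minimax risk over P^q_{L,M} is bounded below as follows: for every measurable estimator μ̂_n mapping n-tuples of Radon measures on Ω to Radon measures on Ω, sup_{P ∈ P^q_{L,M}} E[OT_p(μ̂_n(μ₁,…,μ_n), E(P))^p] ≥ c·M·L^{p−q}·n^{−1/2}, where μ₁,…,μ_n is an i.i.d. sample of law P and the expectation (taken as an upper Lebesgue integral over the sample) is with respect to P^{⊗n}. -/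
open MeasureTheory ENNReal Set

set_option maxHeartbeats 1000000

noncomputable section

abbrev E2 := EuclideanSpace ℝ (Fin 2)

/-- The open half-plane `Ω` above the diagonal. -/
def Omega : Set E2 := {x | x 0 < x 1}

/-- The diagonal `∂Ω`. -/
def diagSet : Set E2 := {x | x 0 = x 1}

/-- `Ω̄ = Ω ∪ ∂Ω`. -/
def OmegaBar : Set E2 := Omega ∪ diagSet

/-- Euclidean distance of a point to the diagonal. -/
def dDiag (x : E2) : ℝ := Metric.infDist x diagSet

/-- Total persistence `Pers_p(μ) = ∫_Ω ‖x-∂Ω‖^p dμ(x)`. -/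
def Pers (p : ℝ) (μ : Measure E2) : ℝ≥0∞ :=
  ∫⁻ x in Omega, ENNReal.ofReal (dDiag x ^ p) ∂μ

/-- Admissible partial transport plans: measures on `Ω̄ × Ω̄` whose first (resp. second)
marginal coincides with `μ` (resp. `ν`) on `Ω`. -/
def Adm (μ ν : Measure E2) : Set (Measure (E2 × E2)) :=
  {π | (π.map Prod.fst).restrict Omega = μ.restrict Omega ∧
       (π.map Prod.snd).restrict Omega = ν.restrict Omega ∧
       π ((OmegaBar ×ˢ OmegaBar)ᶜ) = 0}

/-- `OT_p(μ,ν)^p`, the optimal partial transport cost. -/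
def OTpow (p : ℝ) (μ ν : Measure E2) : ℝ≥0∞ :=
  ⨅ π ∈ Adm μ ν, ∫⁻ z, ENNReal.ofReal (dist z.1 z.2 ^ p) ∂π

/-- The distance `OT_p(μ,ν)`. -/
def OTp (p : ℝ) (μ ν : Measure E2) : ℝ≥0∞ := (OTpow p μ ν) ^ (1/p)

/-- The closed ℓ¹-ball `A_L` of radius `L/√2` centered at `(-L/√8, L/√8)`. -/
def ballA (L : ℝ) : Set E2 :=
  {x | |x 0 + L / Real.sqrt 8| + |x 1 - L / Real.sqrt 8| ≤ L / Real.sqrt 2}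

/-- Membership in `M^q_{L,M}`: supported in `Ω`, in `A_L`, with `Pers_q ≤ M`. -/
def MemMq (q L M : ℝ) (μ : Measure E2) : Prop :=
  μ Omegaᶜ = 0 ∧ μ (ballA L)ᶜ = 0 ∧ Pers q μ ≤ ENNReal.ofReal M

/-- Empirical EPD `μ̄_n = (1/n)(μ₁ + ⋯ + μ_n)` of a sample of `n` persistence measures. -/
def empEPD (n : ℕ) (ω : Fin n → Measure E2) : Measure E2 :=
  (n : ℝ≥0∞)⁻¹ • ∑ i : Fin n, ω i

/-- Distance from `x` to the `j`-th centroid, the last index standing for the diagonal. -/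
def cdistC (k : ℕ) (c : Fin k → E2) (j : Fin (k+1)) (x : E2) : ℝ :=
  if h : (j : ℕ) < k then dist x (c ⟨j, h⟩) else dDiag x

/-- Voronoi cells `V_j(c)` (the last cell being the diagonal cell `V_{k+1}`). -/
def Vcell (k : ℕ) (c : Fin k → E2) (j : Fin (k+1)) : Set E2 :=
  {x ∈ Omega | (∀ j' : Fin (k+1), j' < j → cdistC k c j x ≤ cdistC k c j' x) ∧
               (∀ j' : Fin (k+1), j < j' → cdistC k c j x < cdistC k c j' x)}

/-- The distortion `R_{k,p}(c)`. -/
def distortion (p : ℝ) (μ : Measure E2) (k : ℕ) (c : Fin k → E2) : ℝ≥0∞ :=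
  (∑ j : Fin (k+1), ∫⁻ x in Vcell k c j, ENNReal.ofReal (cdistC k c j x ^ p) ∂μ) ^ (1/p)

/-- The optimal distortion `R_k^* = inf {R_{k,p}(c) : c ∈ Ω̄^k}`. -/
def Rstar (p : ℝ) (μ : Measure E2) (k : ℕ) : ℝ≥0∞ :=
  ⨅ (c : Fin k → E2) (_ : ∀ j, c j ∈ OmegaBar), distortion p μ k c

/-- The set `C_k` of optimal codebooks. -/
def Copt (p : ℝ) (μ : Measure E2) (k : ℕ) : Set (Fin k → E2) :=
  {c | (∀ j, c j ∈ OmegaBar) ∧ distortion p μ k c = Rstar p μ k}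

/-- Support of a measure. -/
def msupport (μ : Measure E2) : Set E2 :=
  {x | ∀ U : Set E2, IsOpen U → x ∈ U → 0 < μ U}

/-- Euclidean distance between codebooks seen as vectors of `ℝ^{2k}`. -/
def cbDist (k : ℕ) (c c' : Fin k → E2) : ℝ :=
  Real.sqrt (∑ j : Fin k, dist (c j) (c' j) ^ 2)

/-- Euclidean norm on `(ℝ²)^k`. -/
def pnorm2 (k : ℕ) (v : Fin k → E2) : ℝ := Real.sqrt (∑ j : Fin k, ‖v j‖ ^ 2)

/-- Distance between the `j`-th and `j'`-th centroids, the last index standing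
for the diagonal. -/
def cdistPt (k : ℕ) (c : Fin k → E2) (j j' : Fin (k+1)) : ℝ :=
  if h : (j : ℕ) < k then
    (if h' : (j' : ℕ) < k then dist (c ⟨j, h⟩) (c ⟨j', h'⟩) else dDiag (c ⟨j, h⟩))
  else (if h' : (j' : ℕ) < k then dDiag (c ⟨j', h'⟩) else 0)

/-- The set `N(c)` of points lying on a boundary between two Voronoi cells. -/
def Nset (k : ℕ) (c : Fin k → E2) : Set E2 :=
  {x ∈ Omega | ∃ j j' : Fin (k+1), j < j' ∧ x ∈ Vcell k c j ∧ cdistC k c j x = cdistC k c j' x}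

/-- The `t`-neighborhood `A^t` of `A` in `Ω`. -/
def tN (A : Set E2) (t : ℝ) : Set E2 := {x ∈ Omega | ∃ a ∈ A, dist x a ≤ t}

/-- `w₂(c, m)_j = ∫_{V_j(c)} x dm(x)`. -/
def w2 (k : ℕ) (c : Fin k → E2) (m : Measure E2) (j : Fin k) : E2 :=
  ∫ x in Vcell k c j.castSucc, x ∂m

/-- Absolute difference in `ℝ≥0∞`. -/
def eabs (a b : ℝ≥0∞) : ℝ≥0∞ := (a - b) + (b - a)


/-! ### Auxiliary material for the proof of Statement 1 -/

section Aux

/-- The off-diagonal point used in the lower-bound construction. -/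
def xpt (L : ℝ) : E2 := WithLp.toLp 2 ![-(L/Real.sqrt 8), L/Real.sqrt 8]

lemma xpt_eval0 (L : ℝ) : xpt L 0 = -(L/Real.sqrt 8) := rfl
lemma xpt_eval1 (L : ℝ) : xpt L 1 = L/Real.sqrt 8 := rfl

lemma cont_eval (i : Fin 2) : Continuous (fun x : E2 => x i) :=
  (continuous_apply i).comp (PiLp.continuous_ofLp 2 _)

lemma measurable_Omega : MeasurableSet Omega :=
  measurableSet_lt ((cont_eval 0).measurable) ((cont_eval 1).measurable)

lemma dist_xpt {L : ℝ} (hL : 0 < L) {y : E2} (hy : y 1 ≤ y 0) :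
    L/2 ≤ dist (xpt L) y := by
  have h8 : (0:ℝ) < Real.sqrt 8 := Real.sqrt_pos.2 (by norm_num)
  have h8sq : Real.sqrt 8 ^ 2 = 8 := Real.sq_sqrt (by norm_num)
  rw [EuclideanSpace.dist_eq]
  rw [Fin.sum_univ_two, xpt_eval0, xpt_eval1, Real.dist_eq, Real.dist_eq]
  set A := |-(L / Real.sqrt 8) - y 0|
  set B := |L / Real.sqrt 8 - y 1|
  have key : (L/2)^2 ≤ A ^ 2 + B ^ 2 := by
    have h1 : (A + B)^2 ≤ 2 * (A ^ 2 + B ^ 2) := by nlinarith [sq_nonneg (A - B)]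
    have h3 : 2*L/Real.sqrt 8 ≤ A + B := by
      have h4 : 2*L/Real.sqrt 8 ≤ |L / Real.sqrt 8 - y 1 - (-(L / Real.sqrt 8) - y 0)| := by
        have h2 : L / Real.sqrt 8 - y 1 - (-(L / Real.sqrt 8) - y 0)
            = 2*L/Real.sqrt 8 + (y 0 - y 1) := by ring
        rw [h2]
        calc 2*L/Real.sqrt 8 ≤ 2*L/Real.sqrt 8 + (y 0 - y 1) := by linarith
        _ ≤ |2*L/Real.sqrt 8 + (y 0 - y 1)| := le_abs_self _
      calc 2*L/Real.sqrt 8 ≤ |L / Real.sqrt 8 - y 1 - (-(L / Real.sqrt 8) - y 0)| := h4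
      _ ≤ B + A := abs_sub _ _
      _ = A + B := by ring
    have h5 : (2*L/Real.sqrt 8)^2 = L^2/2 := by rw [div_pow, h8sq]; ring
    have h6 : (2*L/Real.sqrt 8)^2 ≤ (A+B)^2 := by
      apply pow_le_pow_left₀ (by positivity) h3
    have h7 : (L/2)^2 = L^2/4 := by ring
    linarith
  calc L/2 = Real.sqrt ((L/2)^2) := (Real.sqrt_sq (by positivity)).symm
  _ ≤ _ := Real.sqrt_le_sqrt key

lemma xpt_mem_Omega {L : ℝ} (hL : 0 < L) : xpt L ∈ Omega := by
  have h8 : (0:ℝ) < Real.sqrt 8 := Real.sqrt_pos.2 (by norm_num)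
  simp only [Omega, mem_setOf_eq, xpt_eval0, xpt_eval1]
  have : 0 < L / Real.sqrt 8 := by positivity
  linarith

lemma dDiag_xpt_le {L : ℝ} (hL : 0 < L) : dDiag (xpt L) ≤ L / 2 := by
  have h8 : (0:ℝ) < Real.sqrt 8 := Real.sqrt_pos.2 (by norm_num)
  have h8sq : Real.sqrt 8 ^ 2 = 8 := Real.sq_sqrt (by norm_num)
  have h0 : (0 : E2) ∈ diagSet := by simp [diagSet]
  refine le_trans (Metric.infDist_le_dist_of_mem h0) ?_
  rw [EuclideanSpace.dist_eq, Fin.sum_univ_two, xpt_eval0, xpt_eval1]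
  have : dist (-(L / Real.sqrt 8)) ((0:E2) 0) ^ 2 + dist (L / Real.sqrt 8) ((0:E2) 1) ^ 2
      = (L/2)^2 := by
    have z0 : ((0:E2) 0) = 0 := rfl
    have z1 : ((0:E2) 1) = 0 := rfl
    rw [z0, z1, Real.dist_eq, Real.dist_eq, sub_zero, sub_zero, abs_neg,
      abs_of_pos (by positivity : 0 < L / Real.sqrt 8)]
    rw [div_pow, h8sq]; ring
  rw [this, Real.sqrt_sq (by positivity)]

/-! Lower bounds on the transport cost `OTpow`. -/

lemma cost_meas (p : ℝ) : Measurable (fun z : E2 × E2 => ENNReal.ofReal (dist z.1 z.2 ^ p)) := by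
  fun_prop

lemma cost_lb_aux (p r : ℝ) (hp : 1 ≤ p) (hr : 0 < r) (π : Measure (E2 × E2))
    (S : Set (E2 × E2)) (hS : MeasurableSet S) (hd : ∀ z ∈ S, r ≤ dist z.1 z.2) :
    ENNReal.ofReal (r ^ p) * π S ≤ ∫⁻ z, ENNReal.ofReal (dist z.1 z.2 ^ p) ∂π := by
  calc ENNReal.ofReal (r ^ p) * π S = ∫⁻ _ in S, ENNReal.ofReal (r ^ p) ∂π := by
        rw [setLIntegral_const]
  _ ≤ ∫⁻ z in S, ENNReal.ofReal (dist z.1 z.2 ^ p) ∂π := by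
      refine setLIntegral_mono (cost_meas p) fun z hz => ?_
      exact ENNReal.ofReal_le_ofReal (Real.rpow_le_rpow hr.le (hd z hz) (by linarith))
  _ ≤ _ := setLIntegral_le_lintegral _ _

lemma fst_marg {π : Measure (E2 × E2)} {ν : Measure E2}
    (h1 : (π.map Prod.fst).restrict Omega = ν.restrict Omega)
    {B : Set E2} (hB : MeasurableSet B) (hBΩ : B ⊆ Omega) :
    π (B ×ˢ univ) = ν B := by
  have e := congrArg (fun m : Measure E2 => m B) h1
  simp only [Measure.restrict_apply hB, inter_eq_self_of_subset_left hBΩ] at e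
  rw [Measure.map_apply measurable_fst hB] at e
  rw [← e]; congr 1; ext z; simp

lemma snd_marg {π : Measure (E2 × E2)} {μ : Measure E2}
    (h2 : (π.map Prod.snd).restrict Omega = μ.restrict Omega)
    {B : Set E2} (hB : MeasurableSet B) (hBΩ : B ⊆ Omega) :
    π (univ ×ˢ B) = μ B := by
  have e := congrArg (fun m : Measure E2 => m B) h2
  simp only [Measure.restrict_apply hB, inter_eq_self_of_subset_left hBΩ] at e
  rw [Measure.map_apply measurable_snd hB] at e
  rw [← e]; congr 1; ext z; simp

lemma OTpow_lb_missing (p r : ℝ) (hp : 1 ≤ p) (hr : 0 < r) (x : E2)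
    (hball : Metric.ball x r ⊆ Omega) (ν : Measure E2) (α : ℝ≥0∞) :
    ENNReal.ofReal (r ^ p) * (α - ν (Metric.ball x r)) ≤ OTpow p ν (α • Measure.dirac x) := by
  refine le_iInf fun π => le_iInf fun hπ => ?_
  obtain ⟨h1, h2, h3⟩ := hπ
  set B := Metric.ball x r with hBdef
  have hB : MeasurableSet B := Metric.isOpen_ball.measurableSet
  have hx : x ∈ Omega := hball (Metric.mem_ball_self hr)
  have hxm : MeasurableSet ({x} : Set E2) := measurableSet_singleton x
  have smx : π (univ ×ˢ ({x} : Set E2)) = α := by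
    rw [snd_marg h2 hxm (singleton_subset_iff.2 hx)]
    simp [Measure.smul_apply, Measure.dirac_apply' x hxm]
  have fm : π (B ×ˢ univ) = ν B := fst_marg h1 hB hball
  set S : Set (E2 × E2) := Bᶜ ×ˢ ({x} : Set E2) with hSdef
  have hS : MeasurableSet S := hB.compl.prod hxm
  have key : α - ν B ≤ π S := by
    rw [tsub_le_iff_right]
    calc α = π (univ ×ˢ ({x} : Set E2)) := smx.symm
    _ ≤ π ((Bᶜ ×ˢ ({x} : Set E2)) ∪ (B ×ˢ ({x} : Set E2))) := by
        apply measure_mono; intro z hz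
        simp only [mem_prod, mem_union] at *
        rcases em (z.1 ∈ B) with h | h
        · exact Or.inr ⟨h, hz.2⟩
        · exact Or.inl ⟨h, hz.2⟩
    _ ≤ π S + π (B ×ˢ ({x} : Set E2)) := measure_union_le _ _
    _ ≤ π S + π (B ×ˢ univ) :=
        add_le_add le_rfl (measure_mono (prod_mono_right (subset_univ _)))
    _ = π S + ν B := by rw [fm]
  calc ENNReal.ofReal (r ^ p) * (α - ν B) ≤ ENNReal.ofReal (r ^ p) * π S := by gcongr
  _ ≤ _ := by
      refine cost_lb_aux p r hp hr π S hS fun z hz => ?_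
      obtain ⟨hz1, hz2⟩ := hz
      have hz2' : z.2 = x := hz2
      rw [hz2']
      have : ¬ dist z.1 x < r := fun h => hz1 (Metric.mem_ball.2 h)
      linarith

lemma OTpow_lb_excess (p r : ℝ) (hp : 1 ≤ p) (hr : 0 < r) (x : E2)
    (hball : Metric.ball x r ⊆ Omega)
    (hfar : ∀ z ∈ Metric.ball x r, ∀ w ∈ OmegaBar \ Omega, r ≤ dist z w)
    (ν : Measure E2) (α : ℝ≥0∞) :
    ENNReal.ofReal (r ^ p) * (ν (Metric.ball x r) - α) ≤ OTpow p ν (α • Measure.dirac x) := by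
  refine le_iInf fun π => le_iInf fun hπ => ?_
  obtain ⟨h1, h2, h3⟩ := hπ
  set B := Metric.ball x r with hBdef
  have hB : MeasurableSet B := Metric.isOpen_ball.measurableSet
  have hx : x ∈ Omega := hball (Metric.mem_ball_self hr)
  have hxm : MeasurableSet ({x} : Set E2) := measurableSet_singleton x
  have smx : π (univ ×ˢ ({x} : Set E2)) = α := by
    rw [snd_marg h2 hxm (singleton_subset_iff.2 hx)]
    simp [Measure.smul_apply, Measure.dirac_apply' x hxm]
  have smd : π (univ ×ˢ (Omega \ {x})) = 0 := by
    rw [snd_marg h2 (measurable_Omega.diff hxm) diff_subset]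
    simp [Measure.smul_apply, Measure.dirac_apply' x (measurable_Omega.diff hxm)]
  have fm : π (B ×ˢ univ) = ν B := fst_marg h1 hB hball
  set S : Set (E2 × E2) := B ×ˢ (OmegaBar \ Omega) with hSdef
  have hS : MeasurableSet S := hB.prod ((measurable_Omega.union
    (isClosed_eq (cont_eval 0) (cont_eval 1)).measurableSet).diff measurable_Omega)
  have key : ν B - α ≤ π S := by
    rw [tsub_le_iff_right]
    calc ν B = π (B ×ˢ univ) := fm.symm
    _ ≤ π (S ∪ ((univ ×ˢ ({x} : Set E2)) ∪ ((univ ×ˢ (Omega \ {x}))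
          ∪ (OmegaBar ×ˢ OmegaBar)ᶜ))) := by
        apply measure_mono; intro z hz
        simp only [mem_prod, mem_union, mem_diff, mem_singleton_iff, mem_compl_iff] at *
        by_cases hzx : z.2 = x
        · exact Or.inr (Or.inl ⟨trivial, hzx⟩)
        by_cases hzo : z.2 ∈ Omega
        · exact Or.inr (Or.inr (Or.inl ⟨trivial, hzo, hzx⟩))
        by_cases hzb : z.2 ∈ OmegaBar
        · exact Or.inl ⟨hz.1, hzb, hzo⟩
        · exact Or.inr (Or.inr (Or.inr (fun hc => hzb hc.2)))
    _ ≤ π S + π ((univ ×ˢ ({x} : Set E2)) ∪ ((univ ×ˢ (Omega \ {x}))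
          ∪ (OmegaBar ×ˢ OmegaBar)ᶜ)) := measure_union_le _ _
    _ ≤ π S + (π (univ ×ˢ ({x} : Set E2)) + π ((univ ×ˢ (Omega \ {x}))
          ∪ (OmegaBar ×ˢ OmegaBar)ᶜ)) := add_le_add le_rfl (measure_union_le _ _)
    _ ≤ π S + (π (univ ×ˢ ({x} : Set E2)) + (π (univ ×ˢ (Omega \ {x}))
          + π (OmegaBar ×ˢ OmegaBar)ᶜ)) :=
        add_le_add le_rfl (add_le_add le_rfl (measure_union_le _ _))
    _ = π S + α := by rw [smx, smd, h3]; ring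
  calc ENNReal.ofReal (r ^ p) * (ν B - α) ≤ ENNReal.ofReal (r ^ p) * π S := by gcongr
  _ ≤ _ := cost_lb_aux p r hp hr π S hS fun z hz => hfar z.1 hz.1 z.2 hz.2

/-! The two-point mixture distributions. -/

def Pmix (m : Measure E2) (θ : ℝ) : Measure (Measure E2) :=
  ENNReal.ofReal θ • Measure.dirac m + ENNReal.ofReal (1-θ) • Measure.dirac 0

lemma Pmix_prob (m : Measure E2) {θ : ℝ} (h0 : 0 ≤ θ) (h1 : θ ≤ 1) :
    IsProbabilityMeasure (Pmix m θ) := by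
  constructor
  simp only [Pmix, Measure.add_apply, Measure.smul_apply, smul_eq_mul,
    Measure.dirac_apply' _ MeasurableSet.univ]
  simp only [indicator_of_mem (mem_univ _), Pi.one_apply, mul_one]
  rw [← ENNReal.ofReal_add h0 (by linarith)]
  norm_num

lemma Pmix_join (m : Measure E2) (θ : ℝ) :
    (Pmix m θ).join = ENNReal.ofReal θ • m := by
  refine Measure.ext fun s hs => ?_
  rw [Measure.join_apply hs]
  rw [Pmix, lintegral_add_measure, lintegral_smul_measure, lintegral_smul_measure,
    lintegral_dirac' _ (Measure.measurable_coe hs), lintegral_dirac' _ (Measure.measurable_coe hs)]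
  simp [Measure.smul_apply]

lemma meas_singleton_smul_dirac (x : E2) (c : ℝ≥0∞) :
    MeasurableSet {c • Measure.dirac x} := by
  have hxm : MeasurableSet ({x} : Set E2) := measurableSet_singleton x
  have : {c • Measure.dirac x} = ((fun μ : Measure E2 => μ {x}) ⁻¹' {c}) ∩
      ((fun μ : Measure E2 => μ ({x}ᶜ)) ⁻¹' {0}) := by
    ext μ
    simp only [mem_singleton_iff, mem_inter_iff, mem_preimage]
    constructor
    · rintro rfl
      constructor
      · simp [Measure.smul_apply, Measure.dirac_apply' x hxm]
      · rw [Measure.smul_apply, Measure.dirac_apply' x hxm.compl,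
          indicator_of_notMem (by simp : x ∉ ({x}ᶜ : Set E2))]
        rw [smul_zero]
    · rintro ⟨h1, h2⟩
      refine Measure.ext fun s hs => ?_
      have hdecomp : μ s = μ (s ∩ {x}) + μ (s \ {x}) := (measure_inter_add_diff s hxm).symm
      have h3 : μ (s \ {x}) = 0 := measure_mono_null (diff_subset_compl s {x}) h2
      by_cases hx : x ∈ s
      · have hsx : s ∩ {x} = {x} := by ext y; simp; rintro rfl; exact hx
        rw [hdecomp, hsx, h1, h3, add_zero, Measure.smul_apply,
          Measure.dirac_apply' x hs, indicator_of_mem hx]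
        simp
      · have hsx : s ∩ {x} = ∅ := by ext y; simp; rintro h rfl; exact hx h
        rw [hdecomp, hsx, measure_empty, h3, add_zero, Measure.smul_apply,
          Measure.dirac_apply' x hs, indicator_of_notMem hx]
        simp
  rw [this]
  exact ((Measure.measurable_coe hxm) (measurableSet_singleton c)).inter
    ((Measure.measurable_coe hxm.compl) (measurableSet_singleton 0))

lemma meas_singleton_zero : MeasurableSet {(0 : Measure E2)} := by
  have : {(0 : Measure E2)} = (fun μ : Measure E2 => μ univ) ⁻¹' {0} := by
    ext μ
    simp only [mem_singleton_iff, mem_preimage, Measure.measure_univ_eq_zero]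
  rw [this]
  exact (Measure.measurable_coe MeasurableSet.univ) (measurableSet_singleton 0)

/-! The two-point testing inequality. -/

lemma prod_if_nonneg {n : ℕ} (g : Bool → ℝ) (hg : ∀ v, 0 ≤ g v) (b : Fin n → Bool) :
    0 ≤ ∏ i, g (b i) := Finset.prod_nonneg fun _ _ => hg _

lemma sumMin_ge (n : ℕ) (hn : 1 ≤ n) :
    (7:ℝ)/16 ≤ ∑ b : Fin n → Bool,
      min (∏ i, (if b i then (1:ℝ)/2 else 1/2))
          (∏ i, (if b i then 1/2 + 1/(4*Real.sqrt n) else 1/2 - 1/(4*Real.sqrt n))) := by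
  have hsn : (1:ℝ) ≤ Real.sqrt n := by
    rw [show (1:ℝ) = Real.sqrt 1 by simp]
    exact Real.sqrt_le_sqrt (by exact_mod_cast hn)
  set ε : ℝ := 1/(4*Real.sqrt n) with hε
  have hε0 : 0 < ε := by positivity
  have hε4 : ε ≤ 1/4 := by
    rw [hε]; rw [div_le_div_iff₀ (by positivity) (by norm_num)]; nlinarith
  have hεsq : (n:ℝ) * ε^2 = 1/16 := by
    have h1 : Real.sqrt n ^ 2 = (n:ℝ) := Real.sq_sqrt (by positivity)
    rw [hε]; field_simp; nlinarith [h1]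
  set g0 : Bool → ℝ := fun v => if v then 1/2 else 1/2 with hg0
  set g1 : Bool → ℝ := fun v => if v then 1/2 + ε else 1/2 - ε with hg1
  have hg0n : ∀ v, 0 ≤ g0 v := by intro v; cases v <;> simp [hg0]
  have hg1n : ∀ v, 0 ≤ g1 v := by intro v; cases v <;> simp [hg1] <;> linarith
  set s : Bool → ℝ := fun v => Real.sqrt (g0 v * g1 v) with hs
  have hg0t : g0 true = 1/2 := rfl
  have hg0f : g0 false = 1/2 := rfl
  have hg1t : g1 true = 1/2 + ε := rfl
  have hg1f : g1 false = 1/2 - ε := rfl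
  set v0 : (Fin n → Bool) → ℝ := fun b => ∏ i, g0 (b i) with hv0
  set v1 : (Fin n → Bool) → ℝ := fun b => ∏ i, g1 (b i) with hv1
  set ρ : ℝ := s true + s false with hρ
  have hR : ∑ b : Fin n → Bool, ∏ i, s (b i) = ρ ^ n := by
    rw [hρ, ← Fintype.sum_bool s, Fintype.sum_pow]
  have hS0 : ∑ b : Fin n → Bool, v0 b = 1 := by
    have h : ∑ v, g0 v = 1 := by rw [Fintype.sum_bool, hg0t, hg0f]; norm_num
    rw [hv0]
    calc ∑ b : Fin n → Bool, ∏ i, g0 (b i) = (∑ v, g0 v) ^ n := (Fintype.sum_pow g0 n).symm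
    _ = 1 := by rw [h, one_pow]
  have hS1 : ∑ b : Fin n → Bool, v1 b = 1 := by
    have h : ∑ v, g1 v = 1 := by rw [Fintype.sum_bool, hg1t, hg1f]; norm_num
    rw [hv1]
    calc ∑ b : Fin n → Bool, ∏ i, g1 (b i) = (∑ v, g1 v) ^ n := (Fintype.sum_pow g1 n).symm
    _ = 1 := by rw [h, one_pow]
  have hCS : (ρ ^ n) ^ 2 ≤ (∑ b : Fin n → Bool, min (v0 b) (v1 b)) *
      (∑ b : Fin n → Bool, max (v0 b) (v1 b)) := by
    rw [← hR]
    refine Finset.sum_sq_le_sum_mul_sum_of_sq_eq_mul _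
      (fun b _ => le_min (prod_if_nonneg g0 hg0n b) (prod_if_nonneg g1 hg1n b))
      (fun b _ => le_max_of_le_left (prod_if_nonneg g0 hg0n b)) (fun b _ => ?_)
    rw [min_mul_max]
    calc (∏ i, s (b i)) ^ 2 = ∏ i, s (b i) ^ 2 := (Finset.prod_pow _ _ _).symm
    _ = ∏ i, (g0 (b i) * g1 (b i)) := by
        refine Finset.prod_congr rfl fun i _ => Real.sq_sqrt (mul_nonneg (hg0n _) (hg1n _))
    _ = v0 b * v1 b := by rw [hv0, hv1, Finset.prod_mul_distrib]
  have hmax2 : (∑ b : Fin n → Bool, max (v0 b) (v1 b)) ≤ 2 := by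
    calc ∑ b : Fin n → Bool, max (v0 b) (v1 b) ≤ ∑ b : Fin n → Bool, (v0 b + v1 b) := by
          refine Finset.sum_le_sum fun b _ => max_le_add_of_nonneg
            (prod_if_nonneg g0 hg0n b) (prod_if_nonneg g1 hg1n b)
    _ = 2 := by rw [Finset.sum_add_distrib, hS0, hS1]; norm_num
  have hρsq : 1 - 2*ε^2 ≤ ρ^2 := by
    have hab : s true * s false = Real.sqrt ((1/2*(1/2+ε)) * (1/2*(1/2-ε))) := by
      rw [hs]; simp only [hg0t, hg0f, hg1t, hg1f]
      rw [← Real.sqrt_mul (by positivity)]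
    have h1 : 1/4 - ε^2 ≤ Real.sqrt ((1/2*(1/2+ε)) * (1/2*(1/2-ε))) := by
      rw [show (1/2*(1/2+ε)) * (1/2*(1/2-ε)) = 1/16 - ε^2/4 by ring]
      rcases le_or_gt (1/4 - ε^2) 0 with h | h
      · exact le_trans h (Real.sqrt_nonneg _)
      · rw [← Real.sqrt_sq h.le]
        apply Real.sqrt_le_sqrt; nlinarith
    have hst : s true ^ 2 = 1/2*(1/2+ε) := by
      rw [hs]; simp only [hg0t, hg1t]
      exact Real.sq_sqrt (by nlinarith)
    have hsf : s false ^ 2 = 1/2*(1/2-ε) := by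
      rw [hs]; simp only [hg0f, hg1f]
      exact Real.sq_sqrt (by nlinarith)
    have hsq : ρ^2 = s true ^2 + s false ^2 + 2*(s true * s false) := by rw [hρ]; ring
    rw [hsq, hst, hsf, hab]; nlinarith [h1]
  have hpow : (7:ℝ)/8 ≤ (ρ^2)^n := by
    have h1 : (1 - 2*ε^2 : ℝ)^n ≤ (ρ^2)^n := by
      apply pow_le_pow_left₀ (by nlinarith) hρsq
    have h2 : 1 - 2*(n:ℝ)*ε^2 ≤ (1 - 2*ε^2 : ℝ)^n := by
      have h := one_add_mul_le_pow (a := -(2*ε^2)) (by nlinarith) n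
      calc 1 - 2*(n:ℝ)*ε^2 = 1 + n * (-(2*ε^2)) := by ring
      _ ≤ (1 + -(2*ε^2))^n := h
      _ = (1 - 2*ε^2)^n := by ring_nf
    have h3 : 1 - 2*(n:ℝ)*ε^2 = 7/8 := by
      rw [show 2*(n:ℝ)*ε^2 = 2*((n:ℝ)*ε^2) by ring, hεsq]; norm_num
    linarith
  have hfin : (ρ^n)^2 = (ρ^2)^n := by rw [← pow_mul, ← pow_mul, Nat.mul_comm]
  nlinarith [hCS, hmax2, hpow, hfin,
    Finset.sum_nonneg (fun b (_ : b ∈ (Finset.univ : Finset (Fin n → Bool))) =>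
      le_min (prod_if_nonneg g0 hg0n b) (prod_if_nonneg g1 hg1n b))]


open scoped Classical

def atomT (x : E2) (a : ℝ≥0∞) (n : ℕ) (b : Fin n → Bool) : Fin n → Measure E2 :=
  fun i => if b i then a • Measure.dirac x else 0

lemma atomT_inj {a : ℝ≥0∞} (x : E2) (n : ℕ) (hne : a • Measure.dirac x ≠ 0) :
    Function.Injective (atomT x a n) := by
  intro b b' h
  funext i
  have h2 := congrFun h i
  simp only [atomT] at h2
  cases hb : b i <;> cases hb' : b' i <;> rw [hb, hb'] at h2 <;> first
    | rfl
    | (exfalso; simp only [if_true, if_false] at h2)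
  · exact hne h2.symm
  · exact hne h2

lemma atomT_singleton_meas {a : ℝ≥0∞} (x : E2) (n : ℕ)
    (b : Fin n → Bool) : MeasurableSet {atomT x a n b} := by
  rw [← univ_pi_singleton (atomT x a n b)]
  refine MeasurableSet.univ_pi fun i => ?_
  simp only [atomT]
  cases hb : b i
  · simpa using meas_singleton_zero
  · simpa using meas_singleton_smul_dirac x a

lemma Pmix_apply_atom1 {a : ℝ≥0∞} (x : E2) {θ : ℝ}
    (hne : a • Measure.dirac x ≠ 0) :
    Pmix (a • Measure.dirac x) θ {a • Measure.dirac x} = ENNReal.ofReal θ := by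
  have hm : MeasurableSet {a • Measure.dirac x} := meas_singleton_smul_dirac x a
  have h2 : (0 : Measure E2) ∉ ({a • Measure.dirac x} : Set (Measure E2)) := by
    simpa using fun h => hne h.symm
  rw [Pmix, Measure.add_apply, Measure.smul_apply, Measure.smul_apply,
    Measure.dirac_apply' _ hm, Measure.dirac_apply' _ hm,
    indicator_of_mem (mem_singleton _), indicator_of_notMem h2]
  simp

lemma Pmix_apply_atom0 {a : ℝ≥0∞} (x : E2) {θ : ℝ}
    (hne : a • Measure.dirac x ≠ 0) :
    Pmix (a • Measure.dirac x) θ {(0 : Measure E2)} = ENNReal.ofReal (1-θ) := by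
  have hm : MeasurableSet {(0 : Measure E2)} := meas_singleton_zero
  have h2 : a • Measure.dirac x ∉ ({(0 : Measure E2)} : Set (Measure E2)) := by
    simpa using hne
  rw [Pmix, Measure.add_apply, Measure.smul_apply, Measure.smul_apply,
    Measure.dirac_apply' _ hm, Measure.dirac_apply' _ hm,
    indicator_of_notMem h2, indicator_of_mem (mem_singleton _)]
  simp

lemma Qpi_ge {a : ℝ≥0∞} (x : E2) (n : ℕ) {θ : ℝ}
    (h0 : 0 ≤ θ) (h1 : θ ≤ 1) (hne : a • Measure.dirac x ≠ 0)
    {A : Set (Fin n → Measure E2)} :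
    ∑ b ∈ Finset.univ.filter (fun b => atomT x a n b ∈ A),
        ENNReal.ofReal (∏ i, (if b i then θ else 1-θ)) ≤
      Measure.pi (fun _ : Fin n => Pmix (a • Measure.dirac x) θ) A := by
  haveI : IsProbabilityMeasure (Pmix (a • Measure.dirac x) θ) := Pmix_prob _ h0 h1
  set Q := Measure.pi (fun _ : Fin n => Pmix (a • Measure.dirac x) θ) with hQ
  have hsing : ∀ b : Fin n → Bool, Q {atomT x a n b} =
      ENNReal.ofReal (∏ i, (if b i then θ else 1-θ)) := by
    intro b
    rw [hQ, ← univ_pi_singleton (atomT x a n b), Measure.pi_pi]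
    rw [ENNReal.ofReal_prod_of_nonneg (fun i _ => by split <;> linarith)]
    refine Finset.prod_congr rfl fun i _ => ?_
    simp only [atomT]
    cases hb : b i
    · simpa using Pmix_apply_atom0 x hne
    · simpa using Pmix_apply_atom1 x hne
  calc ∑ b ∈ Finset.univ.filter (fun b => atomT x a n b ∈ A),
        ENNReal.ofReal (∏ i, (if b i then θ else 1-θ))
      = ∑ b ∈ Finset.univ.filter (fun b => atomT x a n b ∈ A), Q {atomT x a n b} := by
        refine Finset.sum_congr rfl fun b _ => (hsing b).symm
  _ = Q (⋃ b ∈ Finset.univ.filter (fun b => atomT x a n b ∈ A), {atomT x a n b}) := by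
        refine (measure_biUnion_finset ?_ ?_).symm
        · intro b hb b' hb' hbb'
          simp only [Function.onFun]
          exact disjoint_singleton.2 fun h => hbb' (atomT_inj x n hne h)
        · exact fun b _ => atomT_singleton_meas x n b
  _ ≤ Q A := by
        refine measure_mono ?_
        intro z hz
        simp only [mem_iUnion, Finset.mem_filter, Finset.mem_univ, true_and,
          mem_singleton_iff] at hz
        obtain ⟨b, hbA, rfl⟩ := hz
        exact hbA

lemma Qpi_ge_compl {a : ℝ≥0∞} (x : E2) (n : ℕ) {θ : ℝ}
    (h0 : 0 ≤ θ) (h1 : θ ≤ 1) (hne : a • Measure.dirac x ≠ 0)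
    {A : Set (Fin n → Measure E2)} :
    ∑ b ∈ Finset.univ.filter (fun b => ¬ (atomT x a n b ∈ A)),
        ENNReal.ofReal (∏ i, (if b i then θ else 1-θ)) ≤
      Measure.pi (fun _ : Fin n => Pmix (a • Measure.dirac x) θ) Aᶜ := by
  refine le_trans (le_of_eq ?_) (Qpi_ge x n h0 h1 hne (A := Aᶜ))
  refine Finset.sum_congr ?_ (fun _ _ => rfl)
  ext b
  simp [mem_compl_iff]

end Aux

/-- Theorem: minimax lower bound over `P^q_{L,M}`.
For `1 ≤ p < ∞` and `q ≥ 0`, there is `c > 0` depending only on `p, q` such that for all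
`L, M > 0`, `n ≥ 1` and every measurable estimator `μ̂_n`,
`sup_{P ∈ P^q_{L,M}} E[OT_p(μ̂_n, E(P))^p] ≥ c M L^{p-q} n^{-1/2}`. -/
theorem statement1 (p q : ℝ) (hp : 1 ≤ p) (hq : 0 ≤ q) :
    ∃ c : ℝ, 0 < c ∧
      ∀ (L M : ℝ), 0 < L → 0 < M → ∀ n : ℕ, 1 ≤ n →
        ∀ est : (Fin n → Measure E2) → Measure E2, Measurable est →
          ENNReal.ofReal (c * M * L ^ (p - q) * (n : ℝ) ^ (-(1 : ℝ)/2)) ≤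
            ⨆ (P : Measure (Measure E2)) (hP : IsProbabilityMeasure P)
                (_ : ∀ᵐ μ ∂P, MemMq q L M μ),
              haveI := hP
              ∫⁻ ω, OTpow p (est ω) P.join ∂(Measure.pi fun _ : Fin n => P) := by
  classical
  refine ⟨7 * (2:ℝ)^q / (256 * (4:ℝ)^p), by positivity, ?_⟩
  intro L M hL hM n hn est hest
  -- scalar setup
  have hsn : (1:ℝ) ≤ Real.sqrt n := by
    rw [show (1:ℝ) = Real.sqrt 1 by simp]
    exact Real.sqrt_le_sqrt (by exact_mod_cast hn)
  have hsn0 : (0:ℝ) < Real.sqrt n := by linarith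
  set ε : ℝ := 1/(4*Real.sqrt n) with hεdef
  have hε0 : 0 < ε := by positivity
  have hε4 : ε ≤ 1/4 := by
    rw [hεdef, div_le_div_iff₀ (by positivity) (by norm_num)]; nlinarith
  have hLq : (0:ℝ) < (L/2) ^ q := Real.rpow_pos_of_pos (by linarith) q
  set a : ℝ := M / (L/2)^q with hadef
  have ha0 : 0 < a := by positivity
  have hx₀Ω : xpt L ∈ Omega := xpt_mem_Omega hL
  have hr0 : (0:ℝ) < L/4 := by linarith
  have hddu : dDiag (xpt L) ≤ L/2 := dDiag_xpt_le hL
  -- the ball around the off-diagonal point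
  have hball : Metric.ball (xpt L) (L/4) ⊆ Omega := by
    intro y hy
    by_contra hyΩ
    have hy10 : y 1 ≤ y 0 := not_lt.1 hyΩ
    have h1 := dist_xpt hL hy10
    rw [Metric.mem_ball, dist_comm] at hy
    linarith
  have hfar : ∀ z ∈ Metric.ball (xpt L) (L/4), ∀ w ∈ OmegaBar \ Omega, L/4 ≤ dist z w := by
    intro z hz w hw
    have hw10 : w 1 ≤ w 0 := by
      rcases hw.1 with h | h
      · exact absurd h hw.2
      · exact le_of_eq h.symm
    have h1 : L/2 ≤ dist (xpt L) w := dist_xpt hL hw10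
    have h2 : dist (xpt L) w ≤ dist (xpt L) z + dist z w := dist_triangle _ _ _
    rw [Metric.mem_ball, dist_comm] at hz
    linarith
  -- the atom
  set aE : ℝ≥0∞ := ENNReal.ofReal a with haEdef
  have haE0 : aE ≠ 0 := (ENNReal.ofReal_pos.2 ha0).ne'
  have haET : aE ≠ ∞ := ENNReal.ofReal_ne_top
  have hmane : aE • Measure.dirac (xpt L) ≠ 0 := by
    intro h
    have h2 := congrArg (fun m : Measure E2 => m univ) h
    simp only [Measure.smul_apply, Measure.dirac_apply' _ MeasurableSet.univ,
      indicator_of_mem (mem_univ _), Pi.one_apply, smul_eq_mul, mul_one,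
      Measure.coe_zero, Pi.zero_apply] at h2
    exact haE0 h2
  -- membership in M^q_{L,M}
  have hballA_meas : MeasurableSet (ballA L) := by
    have hc : Continuous (fun x : E2 =>
        |x 0 + L / Real.sqrt 8| + |x 1 - L / Real.sqrt 8|) := by
      exact (((cont_eval 0).add continuous_const).abs.add
        (((cont_eval 1).sub continuous_const).abs))
    exact measurableSet_le hc.measurable measurable_const
  have hx₀A : xpt L ∈ ballA L := by
    simp only [ballA, mem_setOf_eq, xpt_eval0, xpt_eval1]
    rw [show -(L / Real.sqrt 8) + L / Real.sqrt 8 = 0 by ring, sub_self, abs_zero, add_zero]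
    positivity
  have hdme : Measurable fun x : E2 => ENNReal.ofReal (dDiag x ^ q) := by
    have hc : Continuous dDiag := Metric.continuous_infDist_pt diagSet
    fun_prop
  have hmemma : MemMq q L M (aE • Measure.dirac (xpt L)) := by
    refine ⟨?_, ?_, ?_⟩
    · rw [Measure.smul_apply, Measure.dirac_apply' _ measurable_Omega.compl,
        indicator_of_notMem (by simpa using hx₀Ω), smul_zero]
    · rw [Measure.smul_apply, Measure.dirac_apply' _ hballA_meas.compl,
        indicator_of_notMem (by simpa using hx₀A), smul_zero]
    · rw [Pers, Measure.restrict_smul, lintegral_smul_measure,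
        setLIntegral_dirac' hdme measurable_Omega, if_pos hx₀Ω]
      rw [smul_eq_mul, ← ENNReal.ofReal_mul ha0.le]
      apply ENNReal.ofReal_le_ofReal
      have h1 : dDiag (xpt L) ^ q ≤ (L/2)^q :=
        Real.rpow_le_rpow Metric.infDist_nonneg hddu hq
      have h2 : a * (L/2)^q = M := by rw [hadef]; field_simp
      nlinarith [Real.rpow_nonneg (Metric.infDist_nonneg : 0 ≤ dDiag (xpt L)) q]
  have hmem0 : MemMq q L M (0 : Measure E2) := by
    refine ⟨by simp, by simp, ?_⟩
    simp only [Pers, Measure.restrict_zero, lintegral_zero_measure]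
    positivity
  -- a.e. membership for the mixtures
  have hae : ∀ θ : ℝ, ∀ᵐ μ ∂(Pmix (aE • Measure.dirac (xpt L)) θ), MemMq q L M μ := by
    intro θ
    rw [ae_iff]
    have hmS : MeasurableSet {aE • Measure.dirac (xpt L)} :=
      meas_singleton_smul_dirac (xpt L) aE
    have h0S : MeasurableSet {(0 : Measure E2)} := meas_singleton_zero
    have hsub : {μ : Measure E2 | ¬ MemMq q L M μ} ⊆
        ({aE • Measure.dirac (xpt L)} ∪ {(0 : Measure E2)} : Set (Measure E2))ᶜ := by
      intro μ hμ
      simp only [mem_compl_iff, mem_union, mem_singleton_iff]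
      rintro (rfl | rfl)
      · exact hμ hmemma
      · exact hμ hmem0
    refine measure_mono_null hsub ?_
    rw [Pmix, Measure.add_apply, Measure.smul_apply, Measure.smul_apply,
      Measure.dirac_apply' _ (hmS.union h0S).compl,
      Measure.dirac_apply' _ (hmS.union h0S).compl,
      indicator_of_notMem (by simp), indicator_of_notMem (by simp)]
    simp
  -- probability instances
  have hθ₁1 : (1:ℝ)/2 + ε ≤ 1 := by linarith
  have hθ₁0 : (0:ℝ) ≤ 1/2 + ε := by linarith
  haveI hP₀ : IsProbabilityMeasure (Pmix (aE • Measure.dirac (xpt L)) (1/2)) :=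
    Pmix_prob _ (by norm_num) (by norm_num)
  haveI hP₁ : IsProbabilityMeasure (Pmix (aE • Measure.dirac (xpt L)) (1/2 + ε)) :=
    Pmix_prob _ hθ₁0 hθ₁1
  -- joins
  have hjoin : ∀ θ : ℝ, 0 ≤ θ → (Pmix (aE • Measure.dirac (xpt L)) θ).join
      = ENNReal.ofReal (θ*a) • Measure.dirac (xpt L) := by
    intro θ h
    rw [Pmix_join, smul_smul, haEdef, ← ENNReal.ofReal_mul h]
  -- the test event
  have hBmeas : MeasurableSet (Metric.ball (xpt L) (L/4)) := Metric.isOpen_ball.measurableSet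
  set A : Set (Fin n → Measure E2) :=
    (fun ω => est ω (Metric.ball (xpt L) (L/4))) ⁻¹' (Ici (ENNReal.ofReal ((1/2 + ε/2)*a)))
    with hAdef
  have hAmeas : MeasurableSet A :=
    ((Measure.measurable_coe hBmeas).comp hest) measurableSet_Ici
  -- pointwise cost bounds
  set K : ℝ≥0∞ := ENNReal.ofReal ((L/4)^p) * ENNReal.ofReal (ε*a/2) with hKdef
  have hpt0 : ∀ ω ∈ A, K ≤ OTpow p (est ω)
      ((Pmix (aE • Measure.dirac (xpt L)) (1/2)).join) := by
    intro ω hω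
    rw [hjoin _ (by norm_num)]
    refine le_trans ?_ (OTpow_lb_excess p (L/4) hp hr0 (xpt L) hball hfar (est ω) _)
    rw [hKdef]
    refine mul_le_mul_right ?_ _
    refine ENNReal.le_sub_of_add_le_left ENNReal.ofReal_ne_top ?_
    have h1 : ENNReal.ofReal (1/2*a) + ENNReal.ofReal (ε*a/2)
        = ENNReal.ofReal ((1/2 + ε/2)*a) := by
      rw [← ENNReal.ofReal_add (by nlinarith) (by nlinarith)]
      congr 1; ring
    rw [h1]
    exact hω
  have hpt1 : ∀ ω ∉ A, K ≤ OTpow p (est ω)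
      ((Pmix (aE • Measure.dirac (xpt L)) (1/2 + ε)).join) := by
    intro ω hω
    rw [hjoin _ hθ₁0]
    refine le_trans ?_ (OTpow_lb_missing p (L/4) hp hr0 (xpt L) hball (est ω) _)
    rw [hKdef]
    refine mul_le_mul_right ?_ _
    have h2 : est ω (Metric.ball (xpt L) (L/4)) ≤ ENNReal.ofReal ((1/2 + ε/2)*a) := by
      have h3 := hω
      simp only [hAdef, mem_preimage, mem_Ici, not_le] at h3
      exact h3.le
    refine ENNReal.le_sub_of_add_le_right
      (lt_of_le_of_lt h2 ENNReal.ofReal_lt_top).ne ?_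
    calc ENNReal.ofReal (ε*a/2) + est ω (Metric.ball (xpt L) (L/4))
        ≤ ENNReal.ofReal (ε*a/2) + ENNReal.ofReal ((1/2 + ε/2)*a) := by gcongr
    _ = ENNReal.ofReal ((1/2 + ε)*a) := by
        rw [← ENNReal.ofReal_add (by nlinarith) (by nlinarith)]
        congr 1; ring
  -- risk lower bounds
  set Q₀ : Measure (Fin n → Measure E2) :=
    Measure.pi (fun _ : Fin n => Pmix (aE • Measure.dirac (xpt L)) (1/2)) with hQ₀def
  set Q₁ : Measure (Fin n → Measure E2) :=
    Measure.pi (fun _ : Fin n => Pmix (aE • Measure.dirac (xpt L)) (1/2 + ε)) with hQ₁def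
  have hT0 : K * Q₀ A ≤ ∫⁻ ω, OTpow p (est ω)
      ((Pmix (aE • Measure.dirac (xpt L)) (1/2)).join) ∂Q₀ := by
    calc K * Q₀ A = ∫⁻ _ in A, K ∂Q₀ := (setLIntegral_const _ _).symm
    _ ≤ ∫⁻ ω in A, OTpow p (est ω)
        ((Pmix (aE • Measure.dirac (xpt L)) (1/2)).join) ∂Q₀ :=
      setLIntegral_mono' hAmeas hpt0
    _ ≤ _ := setLIntegral_le_lintegral _ _
  have hT1 : K * Q₁ Aᶜ ≤ ∫⁻ ω, OTpow p (est ω)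
      ((Pmix (aE • Measure.dirac (xpt L)) (1/2 + ε)).join) ∂Q₁ := by
    calc K * Q₁ Aᶜ = ∫⁻ _ in Aᶜ, K ∂Q₁ := (setLIntegral_const _ _).symm
    _ ≤ ∫⁻ ω in Aᶜ, OTpow p (est ω)
        ((Pmix (aE • Measure.dirac (xpt L)) (1/2 + ε)).join) ∂Q₁ :=
      setLIntegral_mono' hAmeas.compl (fun ω hω => hpt1 ω hω)
    _ ≤ _ := setLIntegral_le_lintegral _ _
  -- testing lower bound
  have hQsum : ENNReal.ofReal (7/16) ≤ Q₀ A + Q₁ Aᶜ := by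
    have h0 := Qpi_ge (a := aE) (xpt L) n (θ := (1:ℝ)/2) (by norm_num) (by norm_num)
      hmane (A := A)
    have h1 := Qpi_ge_compl (a := aE) (xpt L) n (θ := (1:ℝ)/2 + ε) hθ₁0 hθ₁1 hmane (A := A)
    calc ENNReal.ofReal (7/16)
        ≤ ENNReal.ofReal (∑ b : Fin n → Bool,
            min (∏ i, (if b i then (1:ℝ)/2 else 1/2))
                (∏ i, (if b i then 1/2 + ε else 1/2 - ε))) :=
          ENNReal.ofReal_le_ofReal (sumMin_ge n hn)
    _ = ∑ b : Fin n → Bool, ENNReal.ofReal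
          (min (∏ i, (if b i then (1:ℝ)/2 else 1/2))
               (∏ i, (if b i then 1/2 + ε else 1/2 - ε))) := by
        rw [ENNReal.ofReal_sum_of_nonneg]
        intro b _
        refine le_min (Finset.prod_nonneg fun i _ => ?_) (Finset.prod_nonneg fun i _ => ?_)
        · split <;> norm_num
        · split <;> [linarith; linarith]
    _ = (∑ b ∈ Finset.univ.filter (fun b => atomT (xpt L) aE n b ∈ A),
          ENNReal.ofReal (min (∏ i, (if b i then (1:ℝ)/2 else 1/2))
               (∏ i, (if b i then 1/2 + ε else 1/2 - ε))))
        + (∑ b ∈ Finset.univ.filter (fun b => ¬ (atomT (xpt L) aE n b ∈ A)),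
          ENNReal.ofReal (min (∏ i, (if b i then (1:ℝ)/2 else 1/2))
               (∏ i, (if b i then 1/2 + ε else 1/2 - ε)))) :=
        (Finset.sum_filter_add_sum_filter_not _ _ _).symm
    _ ≤ (∑ b ∈ Finset.univ.filter (fun b => atomT (xpt L) aE n b ∈ A),
          ENNReal.ofReal (∏ i, (if b i then (1:ℝ)/2 else 1 - 1/2)))
        + (∑ b ∈ Finset.univ.filter (fun b => ¬ (atomT (xpt L) aE n b ∈ A)),
          ENNReal.ofReal (∏ i, (if b i then 1/2 + ε else 1 - (1/2 + ε)))) := by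
        refine add_le_add (Finset.sum_le_sum fun b _ => ?_)
          (Finset.sum_le_sum fun b _ => ?_)
        · refine ENNReal.ofReal_le_ofReal (le_trans (min_le_left _ _) (le_of_eq ?_))
          refine Finset.prod_congr rfl fun i _ => by split <;> ring
        · refine ENNReal.ofReal_le_ofReal (le_trans (min_le_right _ _) (le_of_eq ?_))
          refine Finset.prod_congr rfl fun i _ => by split <;> ring
    _ ≤ Q₀ A + Q₁ Aᶜ := add_le_add h0 h1
  -- put everything together
  set Sup := ⨆ (P : Measure (Measure E2)) (hP : IsProbabilityMeasure P)
      (_ : ∀ᵐ μ ∂P, MemMq q L M μ),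
      haveI := hP
      ∫⁻ ω, OTpow p (est ω) P.join ∂(Measure.pi fun _ : Fin n => P) with hSup
  have hsup0 : ∫⁻ ω, OTpow p (est ω)
      ((Pmix (aE • Measure.dirac (xpt L)) (1/2)).join) ∂Q₀ ≤ Sup := by
    rw [hSup]
    exact le_iSup_of_le (Pmix (aE • Measure.dirac (xpt L)) (1/2))
      (le_iSup_of_le hP₀ (le_iSup_of_le (hae _) le_rfl))
  have hsup1 : ∫⁻ ω, OTpow p (est ω)
      ((Pmix (aE • Measure.dirac (xpt L)) (1/2 + ε)).join) ∂Q₁ ≤ Sup := by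
    rw [hSup]
    exact le_iSup_of_le (Pmix (aE • Measure.dirac (xpt L)) (1/2 + ε))
      (le_iSup_of_le hP₁ (le_iSup_of_le (hae _) le_rfl))
  have hKQ : K * ENNReal.ofReal (7/16) ≤ Sup + Sup := by
    calc K * ENNReal.ofReal (7/16) ≤ K * (Q₀ A + Q₁ Aᶜ) := mul_le_mul_right hQsum K
    _ = K * Q₀ A + K * Q₁ Aᶜ := mul_add _ _ _
    _ ≤ Sup + Sup := add_le_add (le_trans hT0 hsup0) (le_trans hT1 hsup1)
  -- the real-number computation
  have h4p : (0:ℝ) < (4:ℝ)^p := Real.rpow_pos_of_pos (by norm_num) p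
  have h2q : (0:ℝ) < (2:ℝ)^q := Real.rpow_pos_of_pos (by norm_num) q
  have hLp : (0:ℝ) < L^p := Real.rpow_pos_of_pos hL p
  have hLq' : (0:ℝ) < L^q := Real.rpow_pos_of_pos hL q
  have e1 : (L/4:ℝ)^p = L^p/(4:ℝ)^p := Real.div_rpow hL.le (by norm_num) p
  have e2 : (L/2:ℝ)^q = L^q/(2:ℝ)^q := Real.div_rpow hL.le (by norm_num) q
  have e3 : L^(p-q) = L^p/L^q := Real.rpow_sub hL p q
  have e4 : (n:ℝ)^(-(1:ℝ)/2) = 1/Real.sqrt n := by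
    rw [show (-(1:ℝ)/2) = -(1/2 : ℝ) by ring, Real.rpow_neg (Nat.cast_nonneg n),
      ← Real.sqrt_eq_rpow, one_div]
  have hreal : 2 * (7 * (2:ℝ)^q / (256 * (4:ℝ)^p) * M * L ^ (p - q) * (n:ℝ) ^ (-(1:ℝ)/2))
      ≤ (L/4)^p * (ε*a/2) * (7/16) := by
    rw [e1, e3, e4, hεdef, hadef, e2]
    rw [show M / (L ^ q / (2:ℝ) ^ q) = M * (2:ℝ)^q / L^q by field_simp]
    apply le_of_eq
    field_simp
    ring
  have hgoal : ENNReal.ofReal (7 * (2:ℝ)^q / (256 * (4:ℝ)^p) * M * L ^ (p - q)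
      * (n:ℝ) ^ (-(1:ℝ)/2)) + ENNReal.ofReal (7 * (2:ℝ)^q / (256 * (4:ℝ)^p) * M
      * L ^ (p - q) * (n:ℝ) ^ (-(1:ℝ)/2)) ≤ Sup + Sup := by
    refine le_trans ?_ hKQ
    rw [← two_mul]
    calc (2:ℝ≥0∞) * ENNReal.ofReal (7 * (2:ℝ)^q / (256 * (4:ℝ)^p) * M * L ^ (p - q)
        * (n:ℝ) ^ (-(1:ℝ)/2))
        = ENNReal.ofReal (2 * (7 * (2:ℝ)^q / (256 * (4:ℝ)^p) * M * L ^ (p - q)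
          * (n:ℝ) ^ (-(1:ℝ)/2))) := by
          rw [ENNReal.ofReal_mul (by norm_num : (0:ℝ) ≤ 2), ENNReal.ofReal_ofNat]
    _ ≤ ENNReal.ofReal ((L/4)^p * (ε*a/2) * (7/16)) := ENNReal.ofReal_le_ofReal hreal
    _ = K * ENNReal.ofReal (7/16) := by
        have hpos1 : (0:ℝ) ≤ (L/4)^p := Real.rpow_nonneg (by linarith) p
        have hpos2 : (0:ℝ) ≤ ε*a/2 := by nlinarith [mul_pos hε0 ha0]
        rw [hKdef, ← ENNReal.ofReal_mul hpos1, ← ENNReal.ofReal_mul (by nlinarith)]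
  -- conclude by cancelling the factor 2 (via add self)
  by_contra hcon
  push_neg at hcon
  have : Sup + Sup < ENNReal.ofReal (7 * (2:ℝ)^q / (256 * (4:ℝ)^p) * M * L ^ (p - q)
      * (n:ℝ) ^ (-(1:ℝ)/2)) + ENNReal.ofReal (7 * (2:ℝ)^q / (256 * (4:ℝ)^p) * M
      * L ^ (p - q) * (n:ℝ) ^ (-(1:ℝ)/2)) :=
    ENNReal.add_lt_add hcon hcon
  exact absurd hgoal (not_le.2 this)


end
end

section
/- Let 1 ≤ p < ∞, k ≥ 1, and let μ ∈ M^p be a measure whose support contains at least k points. Then the set C_k of optimal codebooks is a nonempty compact subset of Ω̄^k. Moreover, every optimal codebook c* ∈ C_k satisfies: all its centroids c_j* lie in Ω, μ(V_j(c*)) > 0 for every 1 ≤ j ≤ k, and c_j* ≠ c_{j'}* for all 1 ≤ j ≠ j' ≤ k. -/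
open MeasureTheory ENNReal Set

noncomputable section

namespace S5

open scoped Classical

lemma contApply (i : Fin 2) : Continuous fun x : E2 => x i :=
  (EuclideanSpace.proj i : E2 →L[ℝ] ℝ).continuous

lemma diag_closed : IsClosed diagSet :=
  isClosed_eq (contApply 0) (contApply 1)

lemma zero_mem_diag : (0:E2) ∈ diagSet := by simp [diagSet]

lemma diag_nonempty : diagSet.Nonempty := ⟨0, zero_mem_diag⟩

lemma omega_open : IsOpen Omega := isOpen_lt (contApply 0) (contApply 1)

lemma omegaBar_closed : IsClosed OmegaBar := by
  have : OmegaBar = {x : E2 | x 0 ≤ x 1} := by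
    ext x; simp only [OmegaBar, Omega, diagSet, Set.mem_union, Set.mem_setOf_eq]
    constructor
    · rintro (h | h) <;> simp [le_of_lt, le_of_eq, *]
    · intro h; rcases lt_or_eq_of_le h with h | h
      · exact Or.inl h
      · exact Or.inr h
  rw [this]
  exact isClosed_le (contApply 0) (contApply 1)

lemma not_mem_diag_of_omega {x : E2} (hx : x ∈ Omega) : x ∉ diagSet :=
  fun h => absurd h (ne_of_lt hx)

lemma dDiag_nonneg (x : E2) : 0 ≤ dDiag x := Metric.infDist_nonneg

lemma dDiag_pos {x : E2} (hx : x ∈ Omega) : 0 < dDiag x :=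
  (diag_closed.notMem_iff_infDist_pos diag_nonempty).1 (not_mem_diag_of_omega hx)

lemma dDiag_le_dist {x s : E2} (hs : s ∈ diagSet) : dDiag x ≤ dist x s :=
  Metric.infDist_le_dist_of_mem hs

lemma dDiag_le_norm (x : E2) : dDiag x ≤ ‖x‖ := by
  simpa using dDiag_le_dist (x := x) zero_mem_diag

lemma dDiag_lip (x y : E2) : dDiag x ≤ dDiag y + dist x y :=
  Metric.infDist_le_infDist_add_dist

lemma continuous_dDiag : Continuous dDiag := Metric.continuous_infDist_pt _

/-! ### minS -/

def minS (S : Finset E2) (x : E2) : ℝ := S.fold min (dDiag x) (fun s => dist x s)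

lemma le_minS {a : ℝ} {S : Finset E2} {x : E2} :
    a ≤ minS S x ↔ a ≤ dDiag x ∧ ∀ s ∈ S, a ≤ dist x s := Finset.le_fold_min _

lemma minS_le_iff {a : ℝ} {S : Finset E2} {x : E2} :
    minS S x ≤ a ↔ dDiag x ≤ a ∨ ∃ s ∈ S, dist x s ≤ a := Finset.fold_min_le _

lemma minS_le_dDiag (S : Finset E2) (x : E2) : minS S x ≤ dDiag x :=
  (le_minS.1 (le_refl _)).1

lemma minS_le_dist {S : Finset E2} {s : E2} (hs : s ∈ S) (x : E2) : minS S x ≤ dist x s :=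
  (le_minS.1 (le_refl _)).2 s hs

lemma minS_insert (S : Finset E2) (z x : E2) :
    minS (insert z S) x = min (dist x z) (minS S x) := Finset.fold_insert_idem

lemma minS_cases (S : Finset E2) (x : E2) :
    minS S x = dDiag x ∨ ∃ s ∈ S, minS S x = dist x s := by
  classical
  induction S using Finset.induction_on with
  | empty => exact Or.inl rfl
  | @insert a S ha ih =>
    rw [minS_insert]
    rcases le_total (dist x a) (minS S x) with h | h
    · exact Or.inr ⟨a, Finset.mem_insert_self _ _, min_eq_left h⟩
    · rw [min_eq_right h]
      rcases ih with h' | ⟨s, hs, h'⟩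
      · exact Or.inl h'
      · exact Or.inr ⟨s, Finset.mem_insert_of_mem hs, h'⟩

lemma minS_nonneg (S : Finset E2) (x : E2) : 0 ≤ minS S x :=
  le_minS.2 ⟨dDiag_nonneg x, fun s _ => dist_nonneg⟩

lemma minS_pos {S : Finset E2} {x : E2} (hx : x ∈ Omega) (hxS : x ∉ S) : 0 < minS S x := by
  rcases minS_cases S x with h | ⟨s, hs, h⟩
  · rw [h]; exact dDiag_pos hx
  · rw [h]
    exact dist_pos.2 (fun hxs => hxS (hxs ▸ hs))

lemma minS_anti {S T : Finset E2} (h : S ⊆ T) (x : E2) : minS T x ≤ minS S x := by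
  rcases minS_cases S x with h' | ⟨s, hs, h'⟩
  · rw [h']; exact minS_le_dDiag T x
  · rw [h']; exact minS_le_dist (h hs) x

lemma minS_lip (S : Finset E2) (x y : E2) : minS S x ≤ minS S y + dist x y := by
  rcases minS_cases S y with h | ⟨s, hs, h⟩
  · rw [h]
    exact le_trans (minS_le_dDiag S x) (dDiag_lip x y)
  · rw [h]
    calc minS S x ≤ dist x s := minS_le_dist hs x
    _ ≤ dist x y + dist y s := dist_triangle x y s
    _ = dist y s + dist x y := by ring

lemma minS_erase {S : Finset E2} {s : E2} (hs : s ∈ S) (x : E2) :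
    minS S x = min (dist x s) (minS (S.erase s) x) := by
  classical
  conv_lhs => rw [← Finset.insert_erase hs]
  exact minS_insert _ _ _

lemma minS_continuous (S : Finset E2) : Continuous fun x => minS S x := by
  apply Metric.continuous_iff.2
  intro x ε hε
  refine ⟨ε, hε, fun y hy => ?_⟩
  rw [Real.dist_eq, abs_sub_lt_iff]
  have h1 := minS_lip S y x
  have h2 := minS_lip S x y
  have h3 : dist y x = dist x y := dist_comm y x
  constructor <;> linarith

section GG

variable (p : ℝ) (μ : Measure E2)

/-- the cost integrand -/
def cost (S : Finset E2) (x : E2) : ℝ≥0∞ := ENNReal.ofReal (minS S x ^ p)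

lemma measurable_cost (hp : 0 ≤ p) (S : Finset E2) : Measurable (cost p S) :=
  (((Real.continuous_rpow_const hp).comp (minS_continuous S)).measurable).ennreal_ofReal

lemma cost_mono_of_le {S T : Finset E2} (hp : 0 ≤ p) {x : E2}
    (h : minS S x ≤ minS T x) : cost p S x ≤ cost p T x :=
  ENNReal.ofReal_le_ofReal (Real.rpow_le_rpow (minS_nonneg S x) h hp)

lemma cost_le_diag (hp : 0 ≤ p) (S : Finset E2) (x : E2) :
    cost p S x ≤ ENNReal.ofReal (dDiag x ^ p) :=
  ENNReal.ofReal_le_ofReal (Real.rpow_le_rpow (minS_nonneg S x) (minS_le_dDiag S x) hp)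

/-- the quantization cost functional on finite sets of centroids -/
def GG (S : Finset E2) : ℝ≥0∞ := ∫⁻ x in Omega, cost p S x ∂μ

lemma GG_le_Pers (hp : 0 ≤ p) (S : Finset E2) : GG p μ S ≤ Pers p μ :=
  lintegral_mono (cost_le_diag p hp S)

lemma GG_anti (hp : 0 ≤ p) {S T : Finset E2} (h : S ⊆ T) : GG p μ T ≤ GG p μ S :=
  lintegral_mono fun x => cost_mono_of_le p hp (minS_anti h x)

lemma GG_split {B : Set E2} (hB : MeasurableSet B) (S : Finset E2) :
    GG p μ S = (∫⁻ x in Omega ∩ B, cost p S x ∂μ) + ∫⁻ x in Omega \ B, cost p S x ∂μ := by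
  have h1 : (μ.restrict Omega).restrict B = μ.restrict (Omega ∩ B) := by
    rw [Measure.restrict_restrict hB, Set.inter_comm]
  have h2 : (μ.restrict Omega).restrict Bᶜ = μ.restrict (Omega \ B) := by
    rw [Measure.restrict_restrict hB.compl, Set.inter_comm, Set.diff_eq]
  rw [GG, ← lintegral_add_compl (cost p S) hB (μ := μ.restrict Omega), h1, h2]

lemma GG_filter (hp : 0 ≤ p) {S : Finset E2} (hS : ↑S ⊆ OmegaBar) :
    GG p μ S = GG p μ (S.filter (· ∈ Omega)) := by
  unfold GG
  congr 1
  ext x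
  unfold cost
  congr 2
  have h1 : minS S x ≤ minS (S.filter (· ∈ Omega)) x := minS_anti (Finset.filter_subset _ _) x
  have h2 : minS (S.filter (· ∈ Omega)) x ≤ minS S x := by
    rcases minS_cases S x with h | ⟨s, hs, h⟩
    · rw [h]; exact minS_le_dDiag _ x
    · rw [h]
      by_cases hsΩ : s ∈ Omega
      · exact minS_le_dist (Finset.mem_filter.2 ⟨hs, hsΩ⟩) x
      · have hsd : s ∈ diagSet := by
          rcases hS hs with h' | h'
          · exact absurd h' hsΩ
          · exact h'
        exact le_trans (minS_le_dDiag _ x) (dDiag_le_dist hsd)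
  linarith

/-- the tail functional -/
def Tail (r : ℝ) : ℝ≥0∞ := ∫⁻ x in Omega ∩ {x | r < ‖x‖}, ENNReal.ofReal (dDiag x ^ p) ∂μ

lemma Tail_anti {r r' : ℝ} (h : r ≤ r') : Tail p μ r' ≤ Tail p μ r := by
  refine lintegral_mono' (Measure.restrict_mono ?_ le_rfl) le_rfl
  intro x hx
  exact ⟨hx.1, lt_of_le_of_lt h hx.2⟩

lemma measurable_normSet (r : ℝ) : MeasurableSet {x : E2 | r < ‖x‖} :=
  measurableSet_lt measurable_const continuous_norm.measurable

lemma omega_measurable : MeasurableSet Omega := omega_open.measurableSet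

lemma Tail_tendsto (hμp : Pers p μ < ⊤) :
    ∀ ε : ℝ≥0∞, 0 < ε → ∃ n : ℕ, Tail p μ n < ε := by
  intro ε hε
  set ν := μ.withDensity (fun x => ENNReal.ofReal (dDiag x ^ p)) with hν
  have happ : ∀ n : ℕ, Tail p μ n = ν (Omega ∩ {x | (n:ℝ) < ‖x‖}) := by
    intro n
    rw [hν, withDensity_apply _ (omega_measurable.inter (measurable_normSet _))]
    rfl
  have hanti : Antitone (fun n : ℕ => Omega ∩ {x : E2 | (n:ℝ) < ‖x‖}) := by
    intro n m hnm x hx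
    exact ⟨hx.1, lt_of_le_of_lt (show (n:ℝ) ≤ m from Nat.cast_le.2 hnm) hx.2⟩
  have hint : (⋂ n : ℕ, Omega ∩ {x : E2 | (n:ℝ) < ‖x‖}) = ∅ := by
    ext x
    simp only [Set.mem_iInter, Set.mem_inter_iff, Set.mem_setOf_eq, Set.mem_empty_iff_false,
      iff_false, not_forall]
    obtain ⟨n, hn⟩ := exists_nat_gt ‖x‖
    exact ⟨n, fun h => absurd h.2 (not_lt.2 (le_of_lt hn))⟩
  have hfin : ν (Omega ∩ {x : E2 | (0:ℕ) < ‖x‖}) ≠ ⊤ := by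
    refine ne_of_lt (lt_of_le_of_lt ?_ hμp)
    calc ν (Omega ∩ {x | ((0:ℕ):ℝ) < ‖x‖}) ≤ ν Omega := measure_mono Set.inter_subset_left
    _ = Pers p μ := by rw [hν, withDensity_apply _ omega_measurable]; rfl
  have := tendsto_measure_iInter_atTop (μ := ν)
    (fun n => ((omega_measurable.inter (measurable_normSet _))).nullMeasurableSet)
    hanti ⟨0, hfin⟩
  rw [hint] at this
  simp only [measure_empty] at this
  obtain ⟨n, hn⟩ := (this.eventually_lt_const hε).exists
  exact ⟨n, by simpa [happ n] using hn⟩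

lemma restrict_mono_le {A B : Set E2} (h : A ⊆ B) (f : E2 → ℝ≥0∞) :
    ∫⁻ x in A, f x ∂μ ≤ ∫⁻ x in B, f x ∂μ :=
  lintegral_mono' (Measure.restrict_mono h le_rfl) le_rfl

lemma GG_erase_le (hp : 0 ≤ p) {S : Finset E2} {s : E2} (hs : s ∈ S) :
    GG p μ (S.erase s) ≤ GG p μ S + Tail p μ (‖s‖/2) := by
  classical
  set E : Set E2 := {x | dist x s < minS (S.erase s) x} with hEdef
  have hE : MeasurableSet E :=
    measurableSet_lt (Continuous.measurable (continuous_id.dist continuous_const))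
      (minS_continuous _).measurable
  rw [GG_split p μ hE (S.erase s)]
  have t1 : ∫⁻ x in Omega ∩ E, cost p (S.erase s) x ∂μ ≤ Tail p μ (‖s‖/2) := by
    have hsub : Omega ∩ E ⊆ Omega ∩ {x | ‖s‖/2 < ‖x‖} := by
      rintro x ⟨hxΩ, hxE⟩
      refine ⟨hxΩ, ?_⟩
      have h1 : dist x s < minS (S.erase s) x := hxE
      have h2 : minS (S.erase s) x ≤ dDiag x := minS_le_dDiag _ x
      have h3 : dDiag x ≤ ‖x‖ := dDiag_le_norm x
      have h4 : ‖s‖ - ‖x‖ ≤ dist x s := by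
        rw [dist_comm, dist_eq_norm]
        exact norm_sub_norm_le s x
      simp only [Set.mem_setOf_eq]
      linarith
    calc ∫⁻ x in Omega ∩ E, cost p (S.erase s) x ∂μ
        ≤ ∫⁻ x in Omega ∩ E, ENNReal.ofReal (dDiag x ^ p) ∂μ :=
          lintegral_mono (cost_le_diag p hp _)
      _ ≤ Tail p μ (‖s‖/2) := restrict_mono_le μ hsub _
  have t2 : ∫⁻ x in Omega \ E, cost p (S.erase s) x ∂μ ≤ GG p μ S := by
    have heq : ∀ x ∈ Omega \ E, cost p (S.erase s) x = cost p S x := by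
      rintro x ⟨-, hxE⟩
      have h1 : minS (S.erase s) x ≤ dist x s := not_lt.1 hxE
      unfold cost
      rw [minS_erase hs, min_eq_right h1]
    calc ∫⁻ x in Omega \ E, cost p (S.erase s) x ∂μ
        = ∫⁻ x in Omega \ E, cost p S x ∂μ := by
          refine setLIntegral_congr_fun (omega_measurable.diff hE) ?_
          exact heq
      _ ≤ GG p μ S := restrict_mono_le μ Set.diff_subset _
  calc (∫⁻ x in Omega ∩ E, cost p (S.erase s) x ∂μ) + ∫⁻ x in Omega \ E, cost p (S.erase s) x ∂μ
      ≤ Tail p μ (‖s‖/2) + GG p μ S := add_le_add t1 t2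
    _ = GG p μ S + Tail p μ (‖s‖/2) := add_comm _ _

lemma exists_ball_pos (hμΩ : μ Omegaᶜ = 0) {k : ℕ}
    (hsupp : ∃ s : Finset E2, s.card = k ∧ ↑s ⊆ msupport μ)
    {T : Finset E2} (hTk : T.card < k) :
    ∃ z, z ∈ Omega ∧ z ∉ T ∧ 0 < μ (Metric.ball z (minS T z / 3)) := by
  by_contra hcon
  push_neg at hcon
  have hball : ∀ z : E2, z ∈ Omega → z ∉ T → μ (Metric.ball z (minS T z / 3)) = 0 :=
    fun z h1 h2 => le_antisymm (hcon z h1 h2) zero_le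
  set P : Set E2 := Omega \ ↑T with hPdef
  have hμP : μ P = 0 := by
    set f : P → Set E2 := fun i => Metric.ball (i : E2) (minS T (i : E2) / 3) with hfdef
    obtain ⟨Tc, hTcC, hTcU⟩ := TopologicalSpace.isOpen_iUnion_countable f
      (fun i => Metric.isOpen_ball)
    have hcover : P ⊆ ⋃ i, f i := by
      intro x hx
      refine Set.mem_iUnion.2 ⟨⟨x, hx⟩, ?_⟩
      have : 0 < minS T x / 3 := by
        have := minS_pos (S := T) hx.1 (fun h => hx.2 (by exact_mod_cast h))
        linarith
      exact Metric.mem_ball_self this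
    have hU0 : μ (⋃ i, f i) = 0 := by
      rw [← hTcU]
      refine (measure_biUnion_null_iff hTcC).2 ?_
      intro i _
      exact hball i i.2.1 (fun h => i.2.2 h)
    exact le_antisymm (le_trans (measure_mono hcover) (le_of_eq hU0)) zero_le
  have hsub : msupport μ ⊆ ↑T := by
    intro x hx
    by_contra hxT
    have hopen : IsOpen ((↑T : Set E2)ᶜ) := (T.finite_toSet.isClosed).isOpen_compl
    have hmem : x ∈ ((↑T : Set E2)ᶜ) := hxT
    have h0 : μ ((↑T : Set E2)ᶜ) = 0 := by
      have hsub2 : ((↑T : Set E2)ᶜ) ⊆ Omegaᶜ ∪ P := by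
        intro y hy
        by_cases hyΩ : y ∈ Omega
        · exact Or.inr ⟨hyΩ, hy⟩
        · exact Or.inl hyΩ
      refine le_antisymm (le_trans (measure_mono hsub2) ?_) zero_le
      calc μ (Omegaᶜ ∪ P) ≤ μ Omegaᶜ + μ P := measure_union_le _ _
        _ = 0 := by rw [hμΩ, hμP, add_zero]
    exact absurd (hx _ hopen hmem) (by simp [h0])
  obtain ⟨s, hscard, hssub⟩ := hsupp
  have : s ⊆ T := Finset.coe_subset.1 (le_trans hssub hsub)
  have := Finset.card_le_card this
  omega

lemma GG_improve (hp0 : 0 < p) (hμΩ : μ Omegaᶜ = 0) (hμp : Pers p μ < ⊤) {k : ℕ}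
    (hsupp : ∃ s : Finset E2, s.card = k ∧ ↑s ⊆ msupport μ)
    {T : Finset E2} (hTk : T.card < k) :
    ∃ z ∈ Omega, GG p μ (insert z T) < GG p μ T := by
  classical
  have hp : 0 ≤ p := le_of_lt hp0
  obtain ⟨z, hzΩ, hzT, hzμ⟩ := exists_ball_pos μ hμΩ hsupp hTk
  refine ⟨z, hzΩ, ?_⟩
  set a := minS T z with hadef
  have ha : 0 < a := minS_pos hzΩ hzT
  set B := Metric.ball z (a/3) with hBdef
  have hB : MeasurableSet B := Metric.isOpen_ball.measurableSet
  have hm0 : 0 < μ (Omega ∩ B) := by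
    have hle : μ B ≤ μ (Omega ∩ B) + μ Omegaᶜ := by
      calc μ B ≤ μ ((Omega ∩ B) ∪ Omegaᶜ) := measure_mono (fun x hx => by
        by_cases h : x ∈ Omega
        · exact Or.inl ⟨h, hx⟩
        · exact Or.inr h)
        _ ≤ μ (Omega ∩ B) + μ Omegaᶜ := measure_union_le _ _
    rw [hμΩ, add_zero] at hle
    exact lt_of_lt_of_le hzμ hle
  have hlow : ∀ x ∈ B, 2*a/3 ≤ minS T x := by
    intro x hx
    have h1 : minS T z ≤ minS T x + dist z x := minS_lip T z x
    have h2 : dist z x < a/3 := by rw [dist_comm]; exact Metric.mem_ball.1 hx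
    linarith [h1, h2]
  have hmfin : μ (Omega ∩ B) < ⊤ := by
    by_contra htop
    push_neg at htop
    have htop' : μ (Omega ∩ B) = ⊤ := top_le_iff.1 htop
    have hle : ENNReal.ofReal ((2*a/3)^p) * μ (Omega ∩ B) ≤ Pers p μ := by
      rw [← setLIntegral_const (Omega ∩ B) _]
      calc ∫⁻ _ in Omega ∩ B, ENNReal.ofReal ((2*a/3)^p) ∂μ
          ≤ ∫⁻ x in Omega ∩ B, ENNReal.ofReal (dDiag x ^ p) ∂μ := by
            refine setLIntegral_mono' (omega_measurable.inter hB) ?_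
            intro x hx
            refine ENNReal.ofReal_le_ofReal (Real.rpow_le_rpow (by positivity) ?_ hp)
            exact le_trans (hlow x hx.2) (minS_le_dDiag T x)
        _ ≤ Pers p μ := restrict_mono_le μ Set.inter_subset_left _
    rw [htop'] at hle
    rw [ENNReal.mul_top (by
      simp only [ne_eq, ENNReal.ofReal_eq_zero, not_le]
      positivity)] at hle
    exact absurd (lt_of_le_of_lt hle hμp) (lt_irrefl _)
  have hub : ∫⁻ x in Omega ∩ B, cost p (insert z T) x ∂μ
      ≤ ENNReal.ofReal ((a/3)^p) * μ (Omega ∩ B) := by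
    rw [← setLIntegral_const (Omega ∩ B) _]
    refine setLIntegral_mono' (omega_measurable.inter hB) ?_
    intro x hx
    refine ENNReal.ofReal_le_ofReal (Real.rpow_le_rpow (minS_nonneg _ _) ?_ hp)
    calc minS (insert z T) x ≤ dist x z := minS_le_dist (Finset.mem_insert_self _ _) x
      _ ≤ a/3 := le_of_lt (Metric.mem_ball.1 hx.2)
  have hlb : ENNReal.ofReal ((2*a/3)^p) * μ (Omega ∩ B) ≤ ∫⁻ x in Omega ∩ B, cost p T x ∂μ := by
    rw [← setLIntegral_const (Omega ∩ B) _]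
    refine setLIntegral_mono' (omega_measurable.inter hB) ?_
    intro x hx
    exact ENNReal.ofReal_le_ofReal (Real.rpow_le_rpow (by positivity) (hlow x hx.2) hp)
  have hout : ∫⁻ x in Omega \ B, cost p (insert z T) x ∂μ
      ≤ ∫⁻ x in Omega \ B, cost p T x ∂μ :=
    lintegral_mono fun x => cost_mono_of_le p hp (minS_anti (Finset.subset_insert _ _) x)
  have houtfin : ∫⁻ x in Omega \ B, cost p T x ∂μ ≠ ⊤ := by
    refine ne_of_lt (lt_of_le_of_lt ?_ hμp)
    calc ∫⁻ x in Omega \ B, cost p T x ∂μ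
        ≤ ∫⁻ x in Omega, cost p T x ∂μ := restrict_mono_le μ Set.diff_subset _
      _ ≤ Pers p μ := GG_le_Pers p μ hp T
  have hstrict : ENNReal.ofReal ((a/3)^p) * μ (Omega ∩ B)
      < ENNReal.ofReal ((2*a/3)^p) * μ (Omega ∩ B) := by
    refine ENNReal.mul_lt_mul_left (ne_of_gt hm0) (ne_of_lt hmfin) ?_
    rw [ENNReal.ofReal_lt_ofReal_iff (by positivity)]
    exact Real.rpow_lt_rpow (by positivity) (by linarith) hp0
  calc GG p μ (insert z T)
      = (∫⁻ x in Omega ∩ B, cost p (insert z T) x ∂μ)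
        + ∫⁻ x in Omega \ B, cost p (insert z T) x ∂μ := GG_split p μ hB _
    _ ≤ ENNReal.ofReal ((a/3)^p) * μ (Omega ∩ B)
        + ∫⁻ x in Omega \ B, cost p T x ∂μ := add_le_add hub hout
    _ < ENNReal.ofReal ((2*a/3)^p) * μ (Omega ∩ B)
        + ∫⁻ x in Omega \ B, cost p T x ∂μ := ENNReal.add_lt_add_right houtfin hstrict
    _ ≤ (∫⁻ x in Omega ∩ B, cost p T x ∂μ)
        + ∫⁻ x in Omega \ B, cost p T x ∂μ := add_le_add hlb le_rfl
    _ = GG p μ T := (GG_split p μ hB T).symm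

end GG

section Voronoi

variable (p : ℝ) (μ : Measure E2) (k : ℕ) (c : Fin k → E2)

lemma continuous_cdistC (j : Fin (k+1)) : Continuous (cdistC k c j) := by
  unfold cdistC
  split_ifs with h
  · exact Continuous.dist continuous_id continuous_const
  · exact continuous_dDiag

lemma minS_le_cdistC (j : Fin (k+1)) (x : E2) :
    minS (Finset.univ.image c) x ≤ cdistC k c j x := by
  unfold cdistC
  split_ifs with h
  · exact minS_le_dist (Finset.mem_image_of_mem c (Finset.mem_univ _)) x
  · exact minS_le_dDiag _ x

lemma exists_cdistC_eq (x : E2) :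
    ∃ j : Fin (k+1), cdistC k c j x = minS (Finset.univ.image c) x := by
  rcases minS_cases (Finset.univ.image c) x with h | ⟨s, hs, h⟩
  · refine ⟨Fin.last k, ?_⟩
    rw [cdistC, dif_neg (by simp)]
    exact h.symm
  · obtain ⟨j, -, rfl⟩ := Finset.mem_image.1 hs
    refine ⟨j.castSucc, ?_⟩
    rw [cdistC, dif_pos (by simpa using j.isLt), h]
    congr 1

lemma cdistC_eq_of_mem {x : E2} {j : Fin (k+1)} (hx : x ∈ Vcell k c j) :
    cdistC k c j x = minS (Finset.univ.image c) x := by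
  obtain ⟨hxΩ, hle, hlt⟩ := hx
  refine le_antisymm ?_ (minS_le_cdistC k c j x)
  obtain ⟨j', hj'⟩ := exists_cdistC_eq k c x
  rw [← hj']
  rcases lt_trichotomy j' j with h | h | h
  · exact hle j' h
  · rw [h]
  · exact le_of_lt (hlt j' h)

lemma exists_mem_Vcell {x : E2} (hx : x ∈ Omega) : ∃ j, x ∈ Vcell k c j := by
  classical
  set M := Finset.univ.filter
    (fun j : Fin (k+1) => cdistC k c j x = minS (Finset.univ.image c) x) with hM
  have hMne : M.Nonempty := by
    obtain ⟨j, hj⟩ := exists_cdistC_eq k c x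
    exact ⟨j, by simp [hM, hj]⟩
  set j0 := M.max' hMne with hj0
  have hj0M : j0 ∈ M := M.max'_mem hMne
  have hj0eq : cdistC k c j0 x = minS (Finset.univ.image c) x := by
    simpa [hM] using hj0M
  refine ⟨j0, hx, ?_, ?_⟩
  · intro j' _
    rw [hj0eq]; exact minS_le_cdistC k c j' x
  · intro j' hj'
    have hle2 : cdistC k c j0 x ≤ cdistC k c j' x := by
      rw [hj0eq]; exact minS_le_cdistC k c j' x
    rcases lt_or_eq_of_le hle2 with h | h
    · exact h
    · exfalso
      have hmem : j' ∈ M := by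
        simp only [hM, Finset.mem_filter, Finset.mem_univ, true_and]
        rw [← h, hj0eq]
      exact absurd hj' (not_lt.2 (M.le_max' j' hmem))

lemma Vcell_subset_Omega (j : Fin (k+1)) : Vcell k c j ⊆ Omega := fun _ hx => hx.1

lemma Vcell_disjoint : Pairwise (Function.onFun Disjoint (Vcell k c)) := by
  intro i j hij
  rw [Function.onFun, Set.disjoint_left]
  intro x hxi hxj
  rcases lt_trichotomy i j with h | h | h
  · exact absurd (hxj.2.1 i h) (not_le.2 (hxi.2.2 j h))
  · exact hij h
  · exact absurd (hxi.2.1 j h) (not_le.2 (hxj.2.2 i h))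

lemma Vcell_iUnion : (⋃ j, Vcell k c j) = Omega := by
  apply le_antisymm
  · exact Set.iUnion_subset (Vcell_subset_Omega k c)
  · intro x hx
    obtain ⟨j, hj⟩ := exists_mem_Vcell k c hx
    exact Set.mem_iUnion.2 ⟨j, hj⟩

lemma Vcell_measurable (j : Fin (k+1)) : MeasurableSet (Vcell k c j) := by
  have heq : Vcell k c j = Omega ∩
      ((⋂ j', {x | j' < j → cdistC k c j x ≤ cdistC k c j' x}) ∩
       (⋂ j', {x | j < j' → cdistC k c j x < cdistC k c j' x})) := by
    ext x
    simp only [Vcell, Set.mem_inter_iff, Set.mem_iInter, Set.mem_setOf_eq]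
  rw [heq]
  refine omega_measurable.inter (MeasurableSet.inter ?_ ?_)
  · refine MeasurableSet.iInter (fun j' => ?_)
    by_cases h : j' < j
    · have : {x | j' < j → cdistC k c j x ≤ cdistC k c j' x}
          = {x | cdistC k c j x ≤ cdistC k c j' x} := by ext x; simp [h]
      rw [this]
      exact measurableSet_le (continuous_cdistC k c j).measurable
        (continuous_cdistC k c j').measurable
    · have : {x | j' < j → cdistC k c j x ≤ cdistC k c j' x} = Set.univ := by ext x; simp [h]
      rw [this]; exact MeasurableSet.univ
  · refine MeasurableSet.iInter (fun j' => ?_)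
    by_cases h : j < j'
    · have : {x | j < j' → cdistC k c j x < cdistC k c j' x}
          = {x | cdistC k c j x < cdistC k c j' x} := by ext x; simp [h]
      rw [this]
      exact measurableSet_lt (continuous_cdistC k c j).measurable
        (continuous_cdistC k c j').measurable
    · have : {x | j < j' → cdistC k c j x < cdistC k c j' x} = Set.univ := by ext x; simp [h]
      rw [this]; exact MeasurableSet.univ

lemma distortion_eq :
    distortion p μ k c = (GG p μ (Finset.univ.image c)) ^ (1/p) := by
  unfold distortion
  congr 1
  have h1 : ∀ j, ∫⁻ x in Vcell k c j, ENNReal.ofReal (cdistC k c j x ^ p) ∂μ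
      = ∫⁻ x in Vcell k c j, cost p (Finset.univ.image c) x ∂μ := by
    intro j
    refine setLIntegral_congr_fun (Vcell_measurable k c j) ?_
    intro x hx
    unfold cost
    beta_reduce
    rw [cdistC_eq_of_mem k c hx]
  calc ∑ j : Fin (k+1), ∫⁻ x in Vcell k c j, ENNReal.ofReal (cdistC k c j x ^ p) ∂μ
      = ∑ j : Fin (k+1), ∫⁻ x in Vcell k c j, cost p (Finset.univ.image c) x ∂μ :=
        Finset.sum_congr rfl (fun j _ => h1 j)
    _ = ∑' j : Fin (k+1), ∫⁻ x in Vcell k c j, cost p (Finset.univ.image c) x ∂μ :=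
        (tsum_fintype _).symm
    _ = ∫⁻ x in ⋃ j, Vcell k c j, cost p (Finset.univ.image c) x ∂μ :=
        (lintegral_iUnion (Vcell_measurable k c) (Vcell_disjoint k c) _).symm
    _ = GG p μ (Finset.univ.image c) := by rw [Vcell_iUnion]; rfl

lemma Rstar_eq (hp : 0 < p) :
    Rstar p μ k
      = (⨅ (c : Fin k → E2) (_ : ∀ j, c j ∈ OmegaBar), GG p μ (Finset.univ.image c)) ^ (1/p) := by
  have hiso : ∀ a : ℝ≥0∞, (ENNReal.orderIsoRpow (1/p) (by positivity)) a = a ^ (1/p) :=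
    fun a => rfl
  unfold Rstar
  calc ⨅ (c : Fin k → E2) (_ : ∀ j, c j ∈ OmegaBar), distortion p μ k c
      = ⨅ (c : Fin k → E2) (_ : ∀ j, c j ∈ OmegaBar),
          (ENNReal.orderIsoRpow (1/p) (by positivity)) (GG p μ (Finset.univ.image c)) := by
        refine iInf_congr fun c => iInf_congr fun _ => ?_
        rw [hiso, distortion_eq]
    _ = (ENNReal.orderIsoRpow (1/p) (by positivity))
          (⨅ (c : Fin k → E2) (_ : ∀ j, c j ∈ OmegaBar), GG p μ (Finset.univ.image c)) := by
        rw [OrderIso.map_iInf]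
        exact iInf_congr fun c => (OrderIso.map_iInf _ _).symm
    _ = _ := rfl

end Voronoi

section FF

variable (p : ℝ) (μ : Measure E2)

lemma zero_not_mem_omega : (0:E2) ∉ Omega := by simp [Omega]

lemma zero_mem_omegaBar : (0:E2) ∈ OmegaBar := Or.inr zero_mem_diag

/-- cost of a codebook -/
def FF (m : ℕ) (c : Fin m → E2) : ℝ≥0∞ := GG p μ (Finset.univ.image c)

lemma minS_image_fold {m : ℕ} (c : Fin m → E2) (x : E2) :
    minS (Finset.univ.image c) x
      = Finset.univ.fold min (dDiag x) (fun j => dist x (c j)) := by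
  classical
  exact Finset.fold_image_idem

lemma continuous_fold_min {α : Type*} [TopologicalSpace α] {ι : Type*} [DecidableEq ι]
    (s : Finset ι) (b : ℝ) (f : ι → α → ℝ) (hf : ∀ i, Continuous (f i)) :
    Continuous (fun a => s.fold min b (fun i => f i a)) := by
  induction s using Finset.induction_on with
  | empty => simpa using continuous_const
  | @insert i s hi ih =>
    have : (fun a => (insert i s).fold min b (fun i' => f i' a))
        = fun a => min (f i a) (s.fold min b (fun i' => f i' a)) := by
      funext a
      rw [Finset.fold_insert hi]
    rw [this]
    exact Continuous.min (hf i) ih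

lemma continuous_minS_image {m : ℕ} (x : E2) :
    Continuous (fun c : Fin m → E2 => minS (Finset.univ.image c) x) := by
  classical
  have : (fun c : Fin m → E2 => minS (Finset.univ.image c) x)
      = fun c => Finset.univ.fold min (dDiag x) (fun j => dist x (c j)) := by
    funext c; exact minS_image_fold c x
  rw [this]
  exact continuous_fold_min _ _ _ (fun j => Continuous.dist continuous_const (continuous_apply j))

lemma continuous_costc (hp : 0 ≤ p) {m : ℕ} (x : E2) :
    Continuous (fun c : Fin m → E2 => cost p (Finset.univ.image c) x) :=
  ENNReal.continuous_ofReal.comp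
    ((Real.continuous_rpow_const hp).comp (continuous_minS_image x))

lemma continuous_FF (hp : 0 ≤ p) (hμp : Pers p μ < ⊤) (m : ℕ) :
    Continuous (FF p μ m) := by
  rw [continuous_iff_seqContinuous]
  intro cseq c hc
  refine tendsto_lintegral_of_dominated_convergence (μ := μ.restrict Omega)
    (fun x => ENNReal.ofReal (dDiag x ^ p)) (fun n => measurable_cost p hp _)
    (fun n => Filter.Eventually.of_forall (fun x => cost_le_diag p hp _ x))
    (ne_of_lt hμp) ?_
  refine Filter.Eventually.of_forall (fun x => ?_)
  exact ((continuous_costc p hp x).continuousAt.tendsto).comp hc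

/-- optimal cost over sets of at most `m` centroids in `Ω` -/
def II (m : ℕ) : ℝ≥0∞ :=
  ⨅ (S : Finset E2) (_ : S.card ≤ m ∧ ↑S ⊆ Omega), GG p μ S

lemma II_le {m : ℕ} {S : Finset E2} (h1 : S.card ≤ m) (h2 : ↑S ⊆ Omega) :
    II p μ m ≤ GG p μ S := iInf₂_le S ⟨h1, h2⟩

lemma GG_empty : GG p μ ∅ = Pers p μ := rfl

lemma II_le_Pers (m : ℕ) : II p μ m ≤ Pers p μ := by
  rw [← GG_empty]
  exact II_le p μ (Nat.zero_le m) (by simp)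

lemma II_anti {m m' : ℕ} (h : m ≤ m') : II p μ m' ≤ II p μ m :=
  le_iInf₂ fun S hS => II_le p μ (le_trans hS.1 h) hS.2

lemma exists_codebook (m : ℕ) (S : Finset E2) (hcard : S.card ≤ m) :
    ∃ c : Fin m → E2, (∀ j, c j ∈ (↑S : Set E2) ∪ {0}) ∧ ↑S ⊆ ↑(Finset.univ.image c) := by
  classical
  set l := S.toList with hl
  have hlen : l.length = S.card := Finset.length_toList S
  refine ⟨fun j => if h : (j : ℕ) < l.length then l.get ⟨j, h⟩ else 0, ?_, ?_⟩
  · intro j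
    simp only []
    by_cases h : (j : ℕ) < l.length
    · rw [dif_pos h]
      exact Or.inl (by exact_mod_cast Finset.mem_toList.1 (l.get_mem ⟨j, h⟩))
    · rw [dif_neg h]
      exact Or.inr rfl
  · intro y hy
    have hy' : y ∈ l := Finset.mem_toList.2 (by exact_mod_cast hy)
    obtain ⟨i, hig⟩ := List.mem_iff_get.1 hy'
    have hjlt : (i : ℕ) < m := lt_of_lt_of_le (hlen ▸ i.isLt) hcard
    refine Finset.mem_coe.2 (Finset.mem_image.2 ⟨⟨i, hjlt⟩, Finset.mem_univ _, ?_⟩)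
    rw [dif_pos (show ((⟨(i:ℕ), hjlt⟩ : Fin m) : ℕ) < l.length from i.isLt)]
    exact hig ▸ rfl

lemma codebook_real (hp : 0 ≤ p) (m : ℕ) (S : Finset E2) (hcard : S.card ≤ m)
    (hS : ↑S ⊆ Omega) :
    ∃ c : Fin m → E2, (∀ j, c j ∈ OmegaBar) ∧
      (∀ R : ℝ, 0 ≤ R → ↑S ⊆ Metric.closedBall (0:E2) R →
        ∀ j, c j ∈ Metric.closedBall (0:E2) R) ∧
      GG p μ (Finset.univ.image c) = GG p μ S := by
  classical
  obtain ⟨c, hmem, hcover⟩ := exists_codebook m S hcard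
  have himg : ∀ y ∈ Finset.univ.image c, y ∈ (↑S : Set E2) ∪ {0} := by
    intro y hy
    obtain ⟨j, -, rfl⟩ := Finset.mem_image.1 hy
    exact hmem j
  have hvalid : ∀ j, c j ∈ OmegaBar := by
    intro j
    rcases hmem j with h | h
    · exact Or.inl (hS h)
    · rw [Set.mem_singleton_iff.1 h]; exact zero_mem_omegaBar
  refine ⟨c, hvalid, ?_, ?_⟩
  · intro R hR hSb j
    rcases hmem j with h | h
    · exact hSb h
    · rw [Set.mem_singleton_iff.1 h]
      simpa using hR
  · have hsub : ↑(Finset.univ.image c) ⊆ OmegaBar := by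
      intro y hy
      rcases himg y hy with h | h
      · exact Or.inl (hS h)
      · rw [Set.mem_singleton_iff.1 h]; exact zero_mem_omegaBar
    rw [GG_filter p μ hp hsub]
    congr 1
    ext y
    simp only [Finset.mem_filter]
    constructor
    · rintro ⟨hy, hyΩ⟩
      rcases himg y hy with h | h
      · exact_mod_cast h
      · exact absurd (Set.mem_singleton_iff.1 h ▸ hyΩ) zero_not_mem_omega
    · intro hy
      exact ⟨Finset.mem_coe.1 (hcover hy), hS hy⟩

lemma valid_GG_ge {m : ℕ} (hp : 0 ≤ p) {c : Fin m → E2} (hc : ∀ j, c j ∈ OmegaBar) :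
    II p μ m ≤ GG p μ (Finset.univ.image c) := by
  classical
  have hsub : ↑(Finset.univ.image c) ⊆ OmegaBar := by
    intro y hy
    obtain ⟨j, -, rfl⟩ := Finset.mem_image.1 (Finset.mem_coe.1 hy)
    exact hc j
  rw [GG_filter p μ hp hsub]
  refine II_le p μ ?_ ?_
  · calc ((Finset.univ.image c).filter (· ∈ Omega)).card
        ≤ (Finset.univ.image c).card := Finset.card_filter_le _ _
      _ ≤ (Finset.univ : Finset (Fin m)).card := Finset.card_image_le
      _ = m := by simp
  · intro y hy
    exact (Finset.mem_filter.1 (Finset.mem_coe.1 hy)).2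

end FF

section Attain

variable (p : ℝ) (μ : Measure E2)

lemma II_valid_inf (hp : 0 ≤ p) (m : ℕ) :
    (⨅ (c : Fin m → E2) (_ : ∀ j, c j ∈ OmegaBar), GG p μ (Finset.univ.image c))
      = II p μ m := by
  apply le_antisymm
  · refine le_iInf₂ fun S hS => ?_
    obtain ⟨c, hvalid, -, hGG⟩ := codebook_real p μ hp m S hS.1 hS.2
    exact le_trans (iInf₂_le c hvalid) (le_of_eq hGG)
  · exact le_iInf₂ fun c hc => valid_GG_ge p μ hp hc

lemma II_strict (hp0 : 0 < p) (hμΩ : μ Omegaᶜ = 0) (hμp : Pers p μ < ⊤) {k : ℕ}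
    (hsupp : ∃ s : Finset E2, s.card = k ∧ ↑s ⊆ msupport μ)
    {m : ℕ} (hm : m < k)
    (hat : ∃ S : Finset E2, S.card ≤ m ∧ ↑S ⊆ Omega ∧ GG p μ S = II p μ m) :
    II p μ (m+1) < II p μ m := by
  obtain ⟨S, hc, hΩ, hGG⟩ := hat
  obtain ⟨z, hzΩ, himp⟩ := GG_improve p μ hp0 hμΩ hμp hsupp (lt_of_le_of_lt hc hm)
  calc II p μ (m+1) ≤ GG p μ (insert z S) := by
        refine II_le p μ (le_trans (Finset.card_insert_le _ _) (by omega)) ?_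
        intro y hy
        rw [Finset.coe_insert] at hy
        rcases hy with h | h
        · rw [h]; exact hzΩ
        · exact hΩ h
    _ < GG p μ S := himp
    _ = II p μ m := hGG

lemma II_attained (hp0 : 0 < p) (hμΩ : μ Omegaᶜ = 0) (hμp : Pers p μ < ⊤) {k : ℕ}
    (hsupp : ∃ s : Finset E2, s.card = k ∧ ↑s ⊆ msupport μ) :
    ∀ m, m ≤ k → ∃ S : Finset E2, S.card ≤ m ∧ ↑S ⊆ Omega ∧ GG p μ S = II p μ m := by
  have hp : 0 ≤ p := le_of_lt hp0
  intro m
  induction m with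
  | zero =>
    intro _
    refine ⟨∅, le_refl _, by simp, ?_⟩
    refine le_antisymm ?_ (II_le p μ (le_refl _) (by simp))
    refine le_iInf₂ fun S hS => ?_
    have : S = ∅ := Finset.card_eq_zero.1 (Nat.le_zero.1 hS.1)
    rw [this]
  | succ m ih =>
    intro hmk
    have hmk' : m < k := Nat.lt_of_succ_le hmk
    have hat := ih (le_of_lt hmk')
    have hstrict : II p μ (m+1) < II p μ m := II_strict p μ hp0 hμΩ hμp hsupp hmk' hat
    -- pick intermediate values
    obtain ⟨a, ha1, ha2⟩ := exists_between hstrict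
    obtain ⟨b, hb1, hb2⟩ := exists_between ha2
    have hab : a ≤ b := le_of_lt hb1
    have hc' : 0 < b - a := tsub_pos_iff_lt.2 hb1
    have hac : a + (b - a) = b := add_tsub_cancel_of_le hab
    obtain ⟨n, hτ⟩ := Tail_tendsto p μ hμp (b - a) hc'
    set R : ℝ := 2 * (n : ℝ) with hR
    -- all near-minimizers are within the ball of radius R
    have hbound : ∀ S : Finset E2, S.card ≤ m+1 → ↑S ⊆ Omega → GG p μ S < a →
        ↑S ⊆ Metric.closedBall (0:E2) R := by
      intro S hcard hSΩ hSa s hsS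
      have hsS' : s ∈ S := Finset.mem_coe.1 hsS
      by_contra hball
      have hnorm : R < ‖s‖ := by
        simp only [Metric.mem_closedBall, dist_zero_right, not_le] at hball
        exact hball
      have htail : Tail p μ (‖s‖/2) ≤ Tail p μ n := Tail_anti p μ (by
        rw [hR] at hnorm; linarith)
      have h1 : GG p μ (S.erase s) ≤ GG p μ S + Tail p μ (‖s‖/2) :=
        GG_erase_le p μ hp hsS'
      have h2 : GG p μ S + Tail p μ (‖s‖/2) < a + (b - a) := by
        exact ENNReal.add_lt_add hSa (lt_of_le_of_lt htail hτ)
      have h3 : II p μ m ≤ GG p μ (S.erase s) := by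
        refine II_le p μ ?_ ?_
        · have := Finset.card_erase_of_mem hsS'
          omega
        · intro y hy
          exact hSΩ (Finset.coe_subset.2 (Finset.erase_subset s S) hy)
      rw [hac] at h2
      exact absurd (lt_of_le_of_lt h3 (lt_of_le_of_lt h1 h2)) (not_lt.2 (le_of_lt hb2))
    set R' : ℝ := max R 0 with hR'
    have hR'0 : (0:ℝ) ≤ R' := le_max_right R 0
    set K : Set (Fin (m+1) → E2) :=
      Set.pi Set.univ (fun _ => OmegaBar ∩ Metric.closedBall (0:E2) R') with hK
    have hKc : IsCompact K :=
      isCompact_univ_pi (fun _ => (isCompact_closedBall (0:E2) R').inter_left omegaBar_closed)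
    have hKne : K.Nonempty :=
      ⟨fun _ => 0, fun j _ => ⟨zero_mem_omegaBar, Metric.mem_closedBall_self hR'0⟩⟩
    obtain ⟨cstar, hcK, hcmin⟩ :=
      hKc.exists_isMinOn hKne ((continuous_FF p μ hp hμp (m+1)).continuousOn)
    have hvalid : ∀ j, cstar j ∈ OmegaBar := fun j => (hcK j (Set.mem_univ j)).1
    have hge : II p μ (m+1) ≤ FF p μ (m+1) cstar := valid_GG_ge p μ hp hvalid
    -- get a near-minimizer S₀
    have hex : ∃ S : Finset E2, (S.card ≤ m+1 ∧ ↑S ⊆ Omega) ∧ GG p μ S < a := by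
      by_contra hcon
      push_neg at hcon
      have : a ≤ II p μ (m+1) := le_iInf₂ fun S hS => hcon S hS
      exact absurd ha1 (not_lt.2 this)
    obtain ⟨S₀, ⟨hS₀c, hS₀Ω⟩, hS₀a⟩ := hex
    have hS₀b : ↑S₀ ⊆ Metric.closedBall (0:E2) R' :=
      le_trans (hbound S₀ hS₀c hS₀Ω hS₀a)
        (Metric.closedBall_subset_closedBall (le_max_left R 0))
    obtain ⟨c₀, hc₀v, hc₀b, hc₀GG⟩ := codebook_real p μ hp (m+1) S₀ hS₀c hS₀Ω
    have hc₀K : c₀ ∈ K := fun j _ => ⟨hc₀v j, hc₀b R' hR'0 hS₀b j⟩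
    have hFFa : FF p μ (m+1) cstar < a := by
      calc FF p μ (m+1) cstar ≤ FF p μ (m+1) c₀ := hcmin hc₀K
        _ = GG p μ S₀ := hc₀GG
        _ < a := hS₀a
    have hle : FF p μ (m+1) cstar ≤ II p μ (m+1) := by
      refine le_iInf₂ fun S hS => ?_
      by_cases hSa : GG p μ S < a
      · have hSb : ↑S ⊆ Metric.closedBall (0:E2) R' :=
          le_trans (hbound S hS.1 hS.2 hSa)
            (Metric.closedBall_subset_closedBall (le_max_left R 0))
        obtain ⟨c₁, hc₁v, hc₁b, hc₁GG⟩ := codebook_real p μ hp (m+1) S hS.1 hS.2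
        have hc₁K : c₁ ∈ K := fun j _ => ⟨hc₁v j, hc₁b R' hR'0 hSb j⟩
        calc FF p μ (m+1) cstar ≤ FF p μ (m+1) c₁ := hcmin hc₁K
          _ = GG p μ S := hc₁GG
      · exact le_trans (le_of_lt hFFa) (not_lt.1 hSa)
    have heq : FF p μ (m+1) cstar = II p μ (m+1) := le_antisymm hle hge
    classical
    refine ⟨(Finset.univ.image cstar).filter (· ∈ Omega), ?_, ?_, ?_⟩
    · calc ((Finset.univ.image cstar).filter (· ∈ Omega)).card
          ≤ (Finset.univ.image cstar).card := Finset.card_filter_le _ _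
        _ ≤ (Finset.univ : Finset (Fin (m+1))).card := Finset.card_image_le
        _ = m+1 := by simp
    · intro y hy
      exact (Finset.mem_filter.1 (Finset.mem_coe.1 hy)).2
    · rw [← heq]
      have hsub : ↑(Finset.univ.image cstar) ⊆ OmegaBar := by
        intro y hy
        obtain ⟨j, -, rfl⟩ := Finset.mem_image.1 (Finset.mem_coe.1 hy)
        exact hvalid j
      exact (GG_filter p μ hp hsub).symm

end Attain

section Main

variable (p : ℝ) (μ : Measure E2)

lemma rpow_inj (hp0 : 0 < p) {x y : ℝ≥0∞} (h : x ^ (1/p) = y ^ (1/p)) : x = y := by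
  have h1p : 0 < 1/p := by positivity
  exact (ENNReal.orderIsoRpow (1/p) h1p).injective h

lemma Copt_iff (hp0 : 0 < p) (k : ℕ) (c : Fin k → E2) :
    c ∈ Copt p μ k ↔
      (∀ j, c j ∈ OmegaBar) ∧ GG p μ (Finset.univ.image c) = II p μ k := by
  have hbr : Rstar p μ k = (II p μ k) ^ (1/p) := by
    rw [Rstar_eq p μ k hp0, II_valid_inf p μ (le_of_lt hp0) k]
  unfold Copt
  simp only [Set.mem_setOf_eq]
  constructor
  · rintro ⟨hv, hd⟩
    refine ⟨hv, rpow_inj p hp0 ?_⟩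
    rw [← distortion_eq, hd, hbr]
  · rintro ⟨hv, hGG⟩
    refine ⟨hv, ?_⟩
    rw [distortion_eq, hGG, hbr]

lemma Copt_nonempty (hp0 : 0 < p) (hμΩ : μ Omegaᶜ = 0) (hμp : Pers p μ < ⊤) {k : ℕ}
    (hsupp : ∃ s : Finset E2, s.card = k ∧ ↑s ⊆ msupport μ) :
    (Copt p μ k).Nonempty := by
  obtain ⟨S, hc, hΩ, hGG⟩ := II_attained p μ hp0 hμΩ hμp hsupp k (le_refl k)
  obtain ⟨c, hv, -, hGGc⟩ := codebook_real p μ (le_of_lt hp0) k S hc hΩ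
  exact ⟨c, (Copt_iff p μ hp0 k c).2 ⟨hv, by rw [hGGc, hGG]⟩⟩

lemma no_small (hp0 : 0 < p) (hμΩ : μ Omegaᶜ = 0) (hμp : Pers p μ < ⊤) {k : ℕ}
    (hsupp : ∃ s : Finset E2, s.card = k ∧ ↑s ⊆ msupport μ) {T : Finset E2}
    (hTk : T.card < k) (hTΩ : ↑T ⊆ Omega) (hTle : GG p μ T ≤ II p μ k) : False := by
  obtain ⟨z, hzΩ, himp⟩ := GG_improve p μ hp0 hμΩ hμp hsupp hTk
  have h2 : II p μ k ≤ GG p μ (insert z T) := by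
    refine II_le p μ (le_trans (Finset.card_insert_le _ _) (by omega)) ?_
    intro y hy
    rw [Finset.coe_insert] at hy
    rcases hy with h | h
    · rw [h]; exact hzΩ
    · exact hTΩ h
  exact absurd (lt_of_le_of_lt h2 (lt_of_lt_of_le himp hTle)) (lt_irrefl _)

lemma Copt_in_Omega (hp0 : 0 < p) (hμΩ : μ Omegaᶜ = 0) (hμp : Pers p μ < ⊤) {k : ℕ}
    (hk : 1 ≤ k) (hsupp : ∃ s : Finset E2, s.card = k ∧ ↑s ⊆ msupport μ)
    {c : Fin k → E2} (hc : c ∈ Copt p μ k) : ∀ j, c j ∈ Omega := by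
  classical
  have hp : 0 ≤ p := le_of_lt hp0
  obtain ⟨hv, hGG⟩ := (Copt_iff p μ hp0 k c).1 hc
  intro j
  by_contra hj
  have hjd : c j ∈ diagSet := (hv j).resolve_left hj
  set T := (Finset.univ.image c).filter (· ∈ Omega) with hT
  have hTsub : T ⊆ (Finset.univ.image c).erase (c j) := by
    intro y hy
    obtain ⟨hyi, hyΩ⟩ := Finset.mem_filter.1 hy
    refine Finset.mem_erase.2 ⟨?_, hyi⟩
    intro h
    exact hj (h ▸ hyΩ)
  have hne : (Finset.univ.image c).Nonempty := by
    haveI : Nonempty (Fin k) := ⟨⟨0, hk⟩⟩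
    exact (Finset.univ_nonempty).image c
  have h1 : T.card ≤ (Finset.univ.image c).card - 1 := by
    calc T.card ≤ ((Finset.univ.image c).erase (c j)).card := Finset.card_le_card hTsub
      _ = (Finset.univ.image c).card - 1 :=
        Finset.card_erase_of_mem (Finset.mem_image_of_mem c (Finset.mem_univ _))
  have h2 : (Finset.univ.image c).card ≤ k := by
    calc (Finset.univ.image c).card ≤ (Finset.univ : Finset (Fin k)).card :=
        Finset.card_image_le
      _ = k := by simp
  have h3 : 1 ≤ (Finset.univ.image c).card := Finset.card_pos.2 hne
  have hTk : T.card < k := by omega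
  have hsub : ↑(Finset.univ.image c) ⊆ OmegaBar := by
    intro y hy
    obtain ⟨i, -, rfl⟩ := Finset.mem_image.1 (Finset.mem_coe.1 hy)
    exact hv i
  have hTle : GG p μ T ≤ II p μ k := by
    rw [hT, ← GG_filter p μ hp hsub, hGG]
  refine no_small p μ hp0 hμΩ hμp hsupp hTk ?_ hTle
  intro y hy
  exact (Finset.mem_filter.1 (Finset.mem_coe.1 hy)).2

lemma Copt_distinct (hp0 : 0 < p) (hμΩ : μ Omegaᶜ = 0) (hμp : Pers p μ < ⊤) {k : ℕ}
    (hk : 1 ≤ k) (hsupp : ∃ s : Finset E2, s.card = k ∧ ↑s ⊆ msupport μ)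
    {c : Fin k → E2} (hc : c ∈ Copt p μ k) :
    ∀ j j' : Fin k, j ≠ j' → c j ≠ c j' := by
  classical
  have hΩ := Copt_in_Omega p μ hp0 hμΩ hμp hk hsupp hc
  obtain ⟨hv, hGG⟩ := (Copt_iff p μ hp0 k c).1 hc
  intro j j' hne heq
  set T := (Finset.univ.erase j').image c with hT
  have hTfull : T = Finset.univ.image c := by
    apply Finset.Subset.antisymm
    · exact Finset.image_subset_image (Finset.subset_univ _)
    · intro y hy
      obtain ⟨i, -, rfl⟩ := Finset.mem_image.1 hy
      by_cases hij : i = j'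
      · refine Finset.mem_image.2 ⟨j, Finset.mem_erase.2 ⟨hne, Finset.mem_univ _⟩, ?_⟩
        rw [hij, ← heq]
      · exact Finset.mem_image.2 ⟨i, Finset.mem_erase.2 ⟨hij, Finset.mem_univ _⟩, rfl⟩
  have hTk : T.card < k := by
    have h1 : T.card ≤ (Finset.univ.erase j').card := Finset.card_image_le
    have h2 : (Finset.univ.erase j').card = k - 1 := by
      rw [Finset.card_erase_of_mem (Finset.mem_univ _)]
      simp
    omega
  have hTΩ : ↑T ⊆ Omega := by
    intro y hy
    obtain ⟨i, -, rfl⟩ := Finset.mem_image.1 (Finset.mem_coe.1 hy)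
    exact hΩ i
  exact no_small p μ hp0 hμΩ hμp hsupp hTk hTΩ (by rw [hTfull, hGG])

lemma Copt_cells_pos (hp0 : 0 < p) (hμΩ : μ Omegaᶜ = 0) (hμp : Pers p μ < ⊤) {k : ℕ}
    (hk : 1 ≤ k) (hsupp : ∃ s : Finset E2, s.card = k ∧ ↑s ⊆ msupport μ)
    {c : Fin k → E2} (hc : c ∈ Copt p μ k) :
    ∀ j : Fin k, 0 < μ (Vcell k c j.castSucc) := by
  classical
  have hp : 0 ≤ p := le_of_lt hp0
  have hΩ := Copt_in_Omega p μ hp0 hμΩ hμp hk hsupp hc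
  obtain ⟨hv, hGG⟩ := (Copt_iff p μ hp0 k c).1 hc
  intro j
  rw [pos_iff_ne_zero]
  intro h0
  set T := (Finset.univ.erase j).image c with hT
  have hkey : ∀ x, x ∈ Omega → x ∉ Vcell k c j.castSucc →
      minS T x = minS (Finset.univ.image c) x := by
    intro x hxΩ hxV
    obtain ⟨i, hi⟩ := exists_mem_Vcell k c hxΩ
    have hieq := cdistC_eq_of_mem k c hi
    have hine : i ≠ j.castSucc := fun h => hxV (h ▸ hi)
    apply le_antisymm
    · rw [← hieq]
      unfold cdistC
      split_ifs with hik
      · refine minS_le_dist ?_ x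
        refine Finset.mem_image.2 ⟨⟨(i:ℕ), hik⟩, Finset.mem_erase.2 ⟨?_, Finset.mem_univ _⟩, rfl⟩
        intro hcon
        apply hine
        apply Fin.ext
        rw [← hcon]
        simp
      · exact minS_le_dDiag _ x
    · exact minS_anti (Finset.image_subset_image (Finset.subset_univ _)) x
  have hnull1 : (μ.restrict Omega) (Vcell k c j.castSucc) = 0 := by
    rw [Measure.restrict_apply (Vcell_measurable k c _)]
    exact le_antisymm (le_trans (measure_mono Set.inter_subset_left) (le_of_eq h0)) zero_le
  have hnull2 : (μ.restrict Omega) Omegaᶜ = 0 := by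
    rw [Measure.restrict_apply omega_measurable.compl]
    simp
  have hae : cost p T =ᵐ[μ.restrict Omega] cost p (Finset.univ.image c) := by
    rw [Filter.eventuallyEq_iff_exists_mem]
    refine ⟨(Vcell k c j.castSucc ∪ Omegaᶜ)ᶜ, ?_, ?_⟩
    · rw [MeasureTheory.mem_ae_iff, compl_compl]
      exact le_antisymm (le_trans (measure_union_le _ _) (by rw [hnull1, hnull2, add_zero])) zero_le
    · intro x hx
      simp only [Set.mem_compl_iff, Set.mem_union, not_or, not_not] at hx
      unfold cost
      rw [hkey x hx.2 hx.1]
  have hGGT : GG p μ T = II p μ k := by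
    rw [← hGG]
    exact lintegral_congr_ae hae
  have hTk : T.card < k := by
    have h1 : T.card ≤ (Finset.univ.erase j).card := Finset.card_image_le
    have h2 : (Finset.univ.erase j).card = k - 1 := by
      rw [Finset.card_erase_of_mem (Finset.mem_univ _)]
      simp
    omega
  have hTΩ : ↑T ⊆ Omega := by
    intro y hy
    obtain ⟨i, -, rfl⟩ := Finset.mem_image.1 (Finset.mem_coe.1 hy)
    exact hΩ i
  exact no_small p μ hp0 hμΩ hμp hsupp hTk hTΩ (le_of_eq hGGT)

lemma Copt_compact (hp0 : 0 < p) (hμΩ : μ Omegaᶜ = 0) (hμp : Pers p μ < ⊤) {k : ℕ}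
    (hk : 1 ≤ k) (hsupp : ∃ s : Finset E2, s.card = k ∧ ↑s ⊆ msupport μ) :
    IsCompact (Copt p μ k) := by
  classical
  have hp : 0 ≤ p := le_of_lt hp0
  -- closedness
  have hdist_cont : Continuous (fun c : Fin k → E2 => distortion p μ k c) := by
    have heq : (fun c : Fin k → E2 => distortion p μ k c)
        = fun c => (FF p μ k c) ^ (1/p) := funext fun c => distortion_eq p μ k c
    rw [heq]
    exact ENNReal.continuous_rpow_const.comp (continuous_FF p μ hp hμp k)
  have hclosed : IsClosed (Copt p μ k) := by
    have h1 : IsClosed {c : Fin k → E2 | ∀ j, c j ∈ OmegaBar} := by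
      have : {c : Fin k → E2 | ∀ j, c j ∈ OmegaBar}
          = ⋂ j, (fun c : Fin k → E2 => c j) ⁻¹' OmegaBar := by
        ext c; simp
      rw [this]
      exact isClosed_iInter fun j => omegaBar_closed.preimage (continuous_apply j)
    have h2 : IsClosed {c : Fin k → E2 | distortion p μ k c = Rstar p μ k} :=
      isClosed_eq hdist_cont continuous_const
    exact h1.inter h2
  -- boundedness
  have hat := II_attained p μ hp0 hμΩ hμp hsupp (k-1) (by omega)
  have hstrict0 := II_strict p μ hp0 hμΩ hμp hsupp (show k-1 < k by omega) hat
  have hkk : k - 1 + 1 = k := by omega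
  rw [hkk] at hstrict0
  obtain ⟨a, ha1, ha2⟩ := exists_between hstrict0
  obtain ⟨b, hb1, hb2⟩ := exists_between ha2
  have hc' : 0 < b - a := tsub_pos_iff_lt.2 hb1
  have hac : a + (b - a) = b := add_tsub_cancel_of_le (le_of_lt hb1)
  obtain ⟨n, hτ⟩ := Tail_tendsto p μ hμp (b - a) hc'
  set R : ℝ := 2 * (n : ℝ) with hR
  have hsub : Copt p μ k ⊆ Set.pi Set.univ (fun _ : Fin k => Metric.closedBall (0:E2) R) := by
    intro c hc
    have hΩ := Copt_in_Omega p μ hp0 hμΩ hμp hk hsupp hc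
    have hdist := Copt_distinct p μ hp0 hμΩ hμp hk hsupp hc
    obtain ⟨hv, hGG⟩ := (Copt_iff p μ hp0 k c).1 hc
    have hinj : Function.Injective c := by
      intro i i' h
      by_contra hne
      exact hdist i i' hne h
    have hcard : (Finset.univ.image c).card = k := by
      rw [Finset.card_image_of_injective _ hinj]
      simp
    have hSΩ : ↑(Finset.univ.image c) ⊆ Omega := by
      intro y hy
      obtain ⟨i, -, rfl⟩ := Finset.mem_image.1 (Finset.mem_coe.1 hy)
      exact hΩ i
    intro j _
    simp only [Metric.mem_closedBall, dist_zero_right]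
    by_contra hball
    push_neg at hball
    have htail : Tail p μ (‖c j‖/2) ≤ Tail p μ n := Tail_anti p μ (by
      rw [hR] at hball; linarith)
    have hmem : c j ∈ Finset.univ.image c := Finset.mem_image_of_mem c (Finset.mem_univ _)
    have h1 : GG p μ ((Finset.univ.image c).erase (c j))
        ≤ GG p μ (Finset.univ.image c) + Tail p μ (‖c j‖/2) := GG_erase_le p μ hp hmem
    have h2 : GG p μ (Finset.univ.image c) + Tail p μ (‖c j‖/2) < a + (b - a) := by
      refine ENNReal.add_lt_add ?_ (lt_of_le_of_lt htail hτ)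
      rw [hGG]
      exact ha1
    rw [hac] at h2
    have h3 : II p μ (k-1) ≤ GG p μ ((Finset.univ.image c).erase (c j)) := by
      refine II_le p μ ?_ ?_
      · rw [Finset.card_erase_of_mem hmem, hcard]
      · intro y hy
        exact hSΩ (Finset.coe_subset.2 (Finset.erase_subset _ _) hy)
    exact absurd (lt_of_le_of_lt h3 (lt_of_le_of_lt h1 h2)) (not_lt.2 (le_of_lt hb2))
  exact IsCompact.of_isClosed_subset
    (isCompact_univ_pi fun _ => isCompact_closedBall (0:E2) R) hclosed hsub

end Main

end S5

/-- Proposition: existence and properties of optimal codebooks.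
If `μ ∈ M^p` has at least `k` points in its support, the set `C_k` of optimal codebooks is a
nonempty compact subset of `Ω̄^k`; moreover every optimal codebook has all its centroids in
`Ω`, pairwise distinct, and each of its (non-diagonal) Voronoi cells has positive mass. -/
theorem statement5 (p : ℝ) (hp : 1 ≤ p) (k : ℕ) (hk : 1 ≤ k) (μ : Measure E2)
    (hμΩ : μ Omegaᶜ = 0) (hμp : Pers p μ < ⊤)
    (hsupp : ∃ s : Finset E2, s.card = k ∧ ↑s ⊆ msupport μ) :
    (Copt p μ k).Nonempty ∧ IsCompact (Copt p μ k) ∧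
      ∀ c ∈ Copt p μ k,
        (∀ j, c j ∈ Omega) ∧
        (∀ j : Fin k, 0 < μ (Vcell k c j.castSucc)) ∧
        (∀ j j' : Fin k, j ≠ j' → c j ≠ c j') := by
  have hp0 : 0 < p := lt_of_lt_of_le one_pos hp
  exact ⟨S5.Copt_nonempty p μ hp0 hμΩ hμp hsupp,
         S5.Copt_compact p μ hp0 hμΩ hμp hk hsupp,
         fun c hc => ⟨S5.Copt_in_Omega p μ hp0 hμΩ hμp hk hsupp hc,
                      S5.Copt_cells_pos p μ hp0 hμΩ hμp hk hsupp hc,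
                      S5.Copt_distinct p μ hp0 hμΩ hμp hk hsupp hc⟩⟩

end
end

section
/- Let 1 ≤ p < ∞, k ≥ 1, and let μ ∈ M^p be a measure whose support contains at least k points. If c ∈ Ω̄^k is a codebook such that μ(V_j(c)) = 0 for some 1 ≤ j ≤ k, then R_{k,p}(c) > R_k^*; in particular such a codebook is not optimal. Consequently, a codebook with two equal centroids, or with a centroid on ∂Ω, is not optimal. -/
open MeasureTheory ENNReal Set

noncomputable section

namespace St6Aux

lemma measurableSet_Omega : MeasurableSet Omega :=
  measurableSet_lt (EuclideanSpace.proj (0:Fin 2)).continuous.measurable (EuclideanSpace.proj (1:Fin 2)).continuous.measurable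

lemma continuous_eval (i : Fin 2) : Continuous fun x : E2 => x i := (EuclideanSpace.proj i).continuous

lemma isClosed_diagSet : IsClosed diagSet :=
  isClosed_eq (continuous_eval 0) (continuous_eval 1)

lemma diagSet_nonempty : diagSet.Nonempty := ⟨0, rfl⟩

lemma dDiag_nonneg (x : E2) : 0 ≤ dDiag x := Metric.infDist_nonneg

lemma dDiag_pos_of_mem_Omega {x : E2} (hx : x ∈ Omega) : 0 < dDiag x := by
  have hxn : x ∉ diagSet := fun h => absurd h.symm.le (not_le.2 hx)
  exact (isClosed_diagSet.notMem_iff_infDist_pos diagSet_nonempty).1 hxn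

lemma cdistC_nonneg (k : ℕ) (c : Fin k → E2) (j : Fin (k+1)) (x : E2) :
    0 ≤ cdistC k c j x := by
  unfold cdistC; split_ifs
  · exact dist_nonneg
  · exact dDiag_nonneg x

lemma continuous_cdistC (k : ℕ) (c : Fin k → E2) (j : Fin (k+1)) :
    Continuous (cdistC k c j) := by
  unfold cdistC; split_ifs
  · exact continuous_id.dist continuous_const
  · exact Metric.continuous_infDist_pt diagSet

lemma cdistC_lip (k : ℕ) (c : Fin k → E2) (j : Fin (k+1)) (x y : E2) :
    cdistC k c j x ≤ cdistC k c j y + dist x y := by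
  unfold cdistC; split_ifs
  · calc dist x _ ≤ dist x y + dist y _ := dist_triangle _ _ _
      _ = dist y _ + dist x y := add_comm _ _
  · exact Metric.infDist_le_infDist_add_dist

lemma cdistC_last (k : ℕ) (c : Fin k → E2) (x : E2) :
    cdistC k c (Fin.last k) x = dDiag x := by
  unfold cdistC
  rw [dif_neg (by simp)]

lemma cdistC_castSucc (k : ℕ) (c : Fin k → E2) (j : Fin k) (x : E2) :
    cdistC k c j.castSucc x = dist x (c j) := by
  unfold cdistC
  rw [dif_pos (show ((j.castSucc : Fin (k+1)) : ℕ) < k by simp)]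
  exact congrArg (dist x) (congrArg c (Fin.ext (by simp)))

/-- pointwise min distance -/
noncomputable def mmin (k : ℕ) (c : Fin k → E2) (x : E2) : ℝ :=
  Finset.univ.inf' ⟨0, Finset.mem_univ _⟩ (fun j : Fin (k+1) => cdistC k c j x)

lemma mmin_le (k : ℕ) (c : Fin k → E2) (j : Fin (k+1)) (x : E2) :
    mmin k c x ≤ cdistC k c j x := Finset.inf'_le _ (Finset.mem_univ _)

lemma mmin_nonneg (k : ℕ) (c : Fin k → E2) (x : E2) : 0 ≤ mmin k c x :=
  Finset.le_inf' _ _ fun j _ => cdistC_nonneg k c j x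

lemma measurableSet_Vcell (k : ℕ) (c : Fin k → E2) (j : Fin (k+1)) :
    MeasurableSet (Vcell k c j) := by
  have h1 : Vcell k c j = Omega ∩
      ((⋂ (j' : Fin (k+1)) (_ : j' < j), {x | cdistC k c j x ≤ cdistC k c j' x}) ∩
       (⋂ (j' : Fin (k+1)) (_ : j < j'), {x | cdistC k c j x < cdistC k c j' x})) := by
    ext x
    simp only [Vcell, Set.mem_inter_iff, Set.mem_iInter, Set.mem_setOf_eq, Set.mem_sep_iff]
  rw [h1]
  refine measurableSet_Omega.inter (MeasurableSet.inter ?_ ?_) <;>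
    refine MeasurableSet.iInter fun j' => MeasurableSet.iInter fun _ => ?_
  · exact measurableSet_le (continuous_cdistC k c j).measurable
      (continuous_cdistC k c j').measurable
  · exact measurableSet_lt (continuous_cdistC k c j).measurable
      (continuous_cdistC k c j').measurable

lemma Vcell_subset_Omega (k : ℕ) (c : Fin k → E2) (j : Fin (k+1)) :
    Vcell k c j ⊆ Omega := fun _ hx => hx.1

lemma exists_mem_Vcell (k : ℕ) (c : Fin k → E2) {x : E2} (hx : x ∈ Omega) :
    ∃ j, x ∈ Vcell k c j := by
  classical
  set T : Finset (Fin (k+1)) :=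
    Finset.univ.filter (fun j => cdistC k c j x = mmin k c x) with hT
  obtain ⟨i, _, hi⟩ := Finset.exists_mem_eq_inf' (⟨0, Finset.mem_univ _⟩ :
    (Finset.univ : Finset (Fin (k+1))).Nonempty) (fun j : Fin (k+1) => cdistC k c j x)
  have hTne : T.Nonempty := ⟨i, by simp [hT, mmin, hi]⟩
  refine ⟨T.max' hTne, hx, fun j' _ => ?_, fun j' hj' => ?_⟩
  · have h1 : cdistC k c (T.max' hTne) x = mmin k c x := by
      have := T.max'_mem hTne; simp [hT] at this; exact this
    rw [h1]; exact mmin_le k c j' x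
  · have h1 : cdistC k c (T.max' hTne) x = mmin k c x := by
      have := T.max'_mem hTne; simp [hT] at this; exact this
    rw [h1]
    rcases lt_or_eq_of_le (mmin_le k c j' x) with h | h
    · exact h
    · exfalso
      have : j' ∈ T := by simp [hT, h.symm]
      exact absurd (Finset.le_max' T j' this) (not_le.2 hj')

lemma cdistC_eq_mmin_of_mem {k : ℕ} {c : Fin k → E2} {j : Fin (k+1)} {x : E2}
    (hx : x ∈ Vcell k c j) : cdistC k c j x = mmin k c x := by
  refine le_antisymm ?_ (mmin_le k c j x)
  refine Finset.le_inf' _ _ fun j' _ => ?_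
  rcases lt_trichotomy j' j with h | h | h
  · exact hx.2.1 j' h
  · rw [h]
  · exact (hx.2.2 j' h).le

lemma Vcell_disjoint (k : ℕ) (c : Fin k → E2) :
    Pairwise (Function.onFun Disjoint (Vcell k c)) := by
  intro j j' hne
  rw [Function.onFun, Set.disjoint_left]
  intro x hx hx'
  rcases hne.lt_or_gt with h | h
  · exact absurd (hx'.2.1 j h) (not_le.2 (hx.2.2 j' h))
  · exact absurd (hx.2.1 j' h) (not_le.2 (hx'.2.2 j h))

lemma iUnion_Vcell (k : ℕ) (c : Fin k → E2) : (⋃ j, Vcell k c j) = Omega := by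
  apply Set.Subset.antisymm
  · exact Set.iUnion_subset fun j => Vcell_subset_Omega k c j
  · intro x hx
    obtain ⟨j, hj⟩ := exists_mem_Vcell k c hx
    exact Set.mem_iUnion.2 ⟨j, hj⟩

lemma distortion_eq (p : ℝ) (μ : Measure E2) (k : ℕ) (c : Fin k → E2) :
    distortion p μ k c
      = (∫⁻ x in Omega, ENNReal.ofReal (mmin k c x ^ p) ∂μ) ^ (1/p) := by
  unfold distortion
  congr 1
  have h1 : ∀ j : Fin (k+1),
      ∫⁻ x in Vcell k c j, ENNReal.ofReal (cdistC k c j x ^ p) ∂μ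
        = ∫⁻ x in Vcell k c j, ENNReal.ofReal (mmin k c x ^ p) ∂μ := by
    intro j
    refine setLIntegral_congr_fun (measurableSet_Vcell k c j) ?_
    intro x hx
    simp only [cdistC_eq_mmin_of_mem hx]
  calc ∑ j : Fin (k+1), ∫⁻ x in Vcell k c j, ENNReal.ofReal (cdistC k c j x ^ p) ∂μ
      = ∑ j : Fin (k+1), ∫⁻ x in Vcell k c j, ENNReal.ofReal (mmin k c x ^ p) ∂μ := by
        simp_rw [h1]
    _ = ∑' j : Fin (k+1), ∫⁻ x in Vcell k c j, ENNReal.ofReal (mmin k c x ^ p) ∂μ :=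
        (tsum_fintype _).symm
    _ = ∫⁻ x in ⋃ j, Vcell k c j, ENNReal.ofReal (mmin k c x ^ p) ∂μ :=
        (lintegral_iUnion (measurableSet_Vcell k c) (Vcell_disjoint k c) _).symm
    _ = ∫⁻ x in Omega, ENNReal.ofReal (mmin k c x ^ p) ∂μ := by rw [iUnion_Vcell]

end St6Aux

namespace St6Aux

lemma exists_support_pt (k : ℕ) (μ : Measure E2) (hμΩ : μ Omegaᶜ = 0)
    (hsupp : ∃ s : Finset E2, s.card = k ∧ ↑s ⊆ msupport μ)
    (F : Finset E2) (hF : F.card < k) :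
    ∃ x₀, x₀ ∈ msupport μ ∧ x₀ ∈ Omega ∧ x₀ ∉ F := by
  by_contra h
  push_neg at h
  have hnull : μ (Omega \ ↑F) = 0 := by
    set S : Set (Set E2) := {U | IsOpen U ∧ μ U = 0} with hS
    have hsub : Omega \ ↑F ⊆ ⋃₀ S := by
      intro x hx
      have hxs : x ∉ msupport μ := fun hm => hx.2 (h x hm hx.1)
      simp only [msupport, Set.mem_setOf_eq, not_forall, not_lt] at hxs
      obtain ⟨U, hU, hxU, hpos⟩ := hxs
      exact ⟨U, ⟨hU, le_antisymm hpos (by simp)⟩, hxU⟩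
    obtain ⟨T, hTc, hTS, hTeq⟩ := TopologicalSpace.isOpen_sUnion_countable S (fun s hs => hs.1)
    have hTnull : μ (⋃₀ T) = 0 := by
      rw [Set.sUnion_eq_biUnion]
      exact (measure_biUnion_null_iff hTc).2 fun U hU => (hTS hU).2
    exact measure_mono_null (hTeq ▸ hsub) hTnull
  have hFc : μ ((↑F : Set E2))ᶜ = 0 := by
    have hsub2 : ((↑F : Set E2))ᶜ ⊆ (Omega \ ↑F) ∪ Omegaᶜ := by
      intro x hx
      by_cases hxo : x ∈ Omega
      · exact Or.inl ⟨hxo, hx⟩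
      · exact Or.inr hxo
    exact measure_mono_null hsub2 (measure_union_null hnull hμΩ)
  obtain ⟨s, hscard, hssub⟩ := hsupp
  have hsubF : ∀ x ∈ msupport μ, x ∈ F := by
    intro x hx
    by_contra hxF
    have hop : IsOpen ((↑F : Set E2))ᶜ := (F.finite_toSet.isClosed).isOpen_compl
    have h2 := hx _ hop hxF
    rw [hFc] at h2; exact lt_irrefl 0 h2
  have hsF : s ⊆ F := fun x hx => hsubF x (hssub hx)
  have := Finset.card_le_card hsF
  omega

lemma cdistC_update_eq {k : ℕ} (c : Fin k → E2) (j : Fin k) (x₀ : E2)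
    {j'' : Fin (k+1)} (hne : j'' ≠ j.castSucc) (x : E2) :
    cdistC k (Function.update c j x₀) j'' x = cdistC k c j'' x := by
  unfold cdistC
  split_ifs with h
  · have hne2 : (⟨(j'' : ℕ), h⟩ : Fin k) ≠ j := by
      intro he
      exact hne (Fin.ext (by rw [← he]; simp))
    rw [Function.update_of_ne hne2]
  · rfl

lemma Vcell_empty_of_eq {k : ℕ} {c : Fin k → E2} {j j' : Fin k} (h : j < j')
    (hc : c j = c j') : Vcell k c j.castSucc = ∅ := by
  ext x
  simp only [Set.mem_empty_iff_false, iff_false]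
  intro hx
  have h2 := hx.2.2 j'.castSucc (Fin.castSucc_lt_castSucc_iff.2 h)
  rw [cdistC_castSucc, cdistC_castSucc, hc] at h2
  exact lt_irrefl _ h2

lemma Vcell_empty_of_diag {k : ℕ} {c : Fin k → E2} {j : Fin k} (hc : c j ∈ diagSet) :
    Vcell k c j.castSucc = ∅ := by
  ext x
  simp only [Set.mem_empty_iff_false, iff_false]
  intro hx
  have h2 := hx.2.2 (Fin.last k) (Fin.castSucc_lt_last j)
  rw [cdistC_castSucc, cdistC_last] at h2
  exact absurd (Metric.infDist_le_dist_of_mem hc) (not_le.2 h2)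

lemma key (p : ℝ) (hp : 1 ≤ p) (k : ℕ) (hk : 1 ≤ k) (μ : Measure E2)
    (hμΩ : μ Omegaᶜ = 0) (hμp : Pers p μ < ⊤)
    (hsupp : ∃ s : Finset E2, s.card = k ∧ ↑s ⊆ msupport μ)
    (c : Fin k → E2) (hc : ∀ j, c j ∈ OmegaBar) (j : Fin k)
    (hV : μ (Vcell k c j.castSucc) = 0) :
    Rstar p μ k < distortion p μ k c := by
  classical
  have hp0 : 0 ≤ p := le_trans zero_le_one hp
  set V := Vcell k c j.castSucc with hVdef
  -- find a support point away from the other centroids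
  set F : Finset E2 := (Finset.univ.erase j).image c with hF
  have hFcard : F.card < k := by
    calc F.card ≤ (Finset.univ.erase j).card := Finset.card_image_le
      _ = k - 1 := by simp
      _ < k := by omega
  obtain ⟨x₀, hx₀supp, hx₀Ω, hx₀F⟩ := exists_support_pt k μ hμΩ hsupp F hFcard
  -- the minimal distance from x₀ to the other "centroids" (incl. diagonal)
  have hlastmem : Fin.last k ∈ Finset.univ.erase j.castSucc := by
    refine Finset.mem_erase.2 ⟨?_, Finset.mem_univ _⟩
    intro he
    have : k = (j : ℕ) := by
      have := congrArg Fin.val he; simpa using this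
    omega
  have hTne : (Finset.univ.erase j.castSucc).Nonempty := ⟨_, hlastmem⟩
  set s₀ : ℝ := (Finset.univ.erase j.castSucc).inf' hTne
      (fun j' : Fin (k+1) => cdistC k c j' x₀) with hs₀
  have hs₀pos : 0 < s₀ := by
    rw [hs₀, Finset.lt_inf'_iff]
    intro j' hj'
    have hj'ne : j' ≠ j.castSucc := (Finset.mem_erase.1 hj').1
    unfold cdistC
    split_ifs with hlt
    · refine dist_pos.2 ?_
      intro he
      refine hx₀F ?_
      rw [hF]
      refine Finset.mem_image.2 ⟨⟨(j' : ℕ), hlt⟩, ?_, he.symm⟩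
      refine Finset.mem_erase.2 ⟨?_, Finset.mem_univ _⟩
      intro he2
      exact hj'ne (Fin.ext (by rw [← he2]; simp))
    · exact dDiag_pos_of_mem_Omega hx₀Ω
  set r : ℝ := s₀ / 3 with hr
  have hrpos : 0 < r := by positivity
  set c' : Fin k → E2 := Function.update c j x₀ with hc'def
  have hc' : ∀ i, c' i ∈ OmegaBar := by
    intro i
    rw [hc'def]
    by_cases hij : i = j
    · rw [hij, Function.update_self]; exact Or.inl hx₀Ω
    · rw [Function.update_of_ne hij]; exact hc i
  -- lower bound on mmin c off V
  have hlow : ∀ x ∈ Omega, x ∉ V → ∃ j'' : Fin (k+1), j'' ≠ j.castSucc ∧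
      mmin k c x = cdistC k c j'' x := by
    intro x hxΩ hxV
    obtain ⟨j'', hj''⟩ := exists_mem_Vcell k c hxΩ
    refine ⟨j'', ?_, (cdistC_eq_mmin_of_mem hj'').symm⟩
    intro he; rw [he] at hj''; exact hxV hj''
  -- pointwise key inequality
  set ind : E2 → ℝ≥0∞ :=
    (Metric.ball x₀ r \ V).indicator (fun _ => ENNReal.ofReal (r ^ p)) with hind
  have hkeypt : ∀ x ∈ Omega, x ∉ V →
      ENNReal.ofReal (mmin k c' x ^ p) + ind x ≤ ENNReal.ofReal (mmin k c x ^ p) := by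
    intro x hxΩ hxV
    obtain ⟨j'', hj''ne, hj''eq⟩ := hlow x hxΩ hxV
    have hlex : mmin k c' x ≤ mmin k c x := by
      rw [hj''eq, ← cdistC_update_eq c j x₀ hj''ne x]
      exact mmin_le k c' j'' x
    by_cases hxB : x ∈ Metric.ball x₀ r
    · have hindx : ind x = ENNReal.ofReal (r ^ p) := by
        rw [hind, Set.indicator_of_mem (Set.mem_diff_of_mem hxB hxV)]
      rw [hindx]
      have hm' : mmin k c' x ≤ r := by
        have h1 : mmin k c' x ≤ dist x x₀ := by
          have := mmin_le k c' j.castSucc x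
          rwa [cdistC_castSucc, hc'def, Function.update_self] at this
        exact h1.trans (le_of_lt (Metric.mem_ball.1 hxB))
      have hm : 2 * r ≤ mmin k c x := by
        rw [hj''eq]
        have h1 : cdistC k c j'' x₀ ≤ cdistC k c j'' x + dist x₀ x := cdistC_lip k c j'' x₀ x
        have h2 : s₀ ≤ cdistC k c j'' x₀ :=
          Finset.inf'_le _ (Finset.mem_erase.2 ⟨hj''ne, Finset.mem_univ _⟩)
        have h3 : dist x₀ x < r := by rw [dist_comm]; exact Metric.mem_ball.1 hxB
        have : s₀ = 3 * r := by rw [hr]; ring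
        linarith
      rw [← ENNReal.ofReal_add (Real.rpow_nonneg (mmin_nonneg k c' x) p) (Real.rpow_nonneg hrpos.le p)]
      refine ENNReal.ofReal_le_ofReal ?_
      have e1 : mmin k c' x ^ p ≤ r ^ p :=
        Real.rpow_le_rpow (mmin_nonneg k c' x) hm' hp0
      have e2 : (2:ℝ) * r ^ p ≤ (2 * r) ^ p := by
        rw [Real.mul_rpow (by norm_num) hrpos.le]
        have : (2:ℝ) = 2 ^ (1:ℝ) := (Real.rpow_one 2).symm
        nlinarith [Real.rpow_le_rpow_of_exponent_le (one_le_two) hp,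
          Real.rpow_nonneg hrpos.le p, Real.rpow_one (2:ℝ)]
      have e3 : (2 * r) ^ p ≤ mmin k c x ^ p :=
        Real.rpow_le_rpow (by positivity) hm hp0
      linarith
    · have hindx : ind x = 0 := by
        rw [hind, Set.indicator_of_notMem (fun hmem => hxB hmem.1)]
      rw [hindx, add_zero]
      exact ENNReal.ofReal_le_ofReal
        (Real.rpow_le_rpow (mmin_nonneg k c' x) hlex hp0)
  -- integral comparison
  set f : E2 → ℝ≥0∞ := fun x => ENNReal.ofReal (mmin k c x ^ p) with hf
  set g : E2 → ℝ≥0∞ := fun x => ENNReal.ofReal (mmin k c' x ^ p) with hg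
  set J : ℝ≥0∞ := ∫⁻ x in Omega, f x ∂μ with hJ
  set I : ℝ≥0∞ := ∫⁻ x in Omega, g x ∂μ with hI
  have hmeasBV : MeasurableSet (Metric.ball x₀ r \ V) :=
    Metric.isOpen_ball.measurableSet.diff (measurableSet_Vcell k c j.castSucc)
  have hmeasind : Measurable ind := by
    rw [hind]; exact measurable_const.indicator hmeasBV
  have hae : ∀ᵐ x ∂(μ.restrict Omega), g x + ind x ≤ f x := by
    refine (ae_restrict_iff' measurableSet_Omega).2 ?_
    rw [MeasureTheory.ae_iff]
    refine measure_mono_null ?_ hV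
    intro x hx
    simp only [Set.mem_setOf_eq, not_forall] at hx
    obtain ⟨hxo, hxle⟩ := hx
    by_contra hxV
    exact hxle (hkeypt x hxo hxV)
  have hIind : I + ∫⁻ x in Omega, ind x ∂μ ≤ J := by
    rw [hI, ← lintegral_add_right _ hmeasind]
    exact lintegral_mono_ae hae
  have hindval : ∫⁻ x in Omega, ind x ∂μ
      = ENNReal.ofReal (r ^ p) * μ ((Metric.ball x₀ r \ V) ∩ Omega) := by
    rw [hind, lintegral_indicator hmeasBV, setLIntegral_const,
      Measure.restrict_apply hmeasBV]
  have hballpos : 0 < μ ((Metric.ball x₀ r \ V) ∩ Omega) := by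
    have hsub : Metric.ball x₀ r ⊆ ((Metric.ball x₀ r \ V) ∩ Omega) ∪ (V ∪ Omegaᶜ) := by
      intro x hx
      by_cases h1 : x ∈ V
      · exact Or.inr (Or.inl h1)
      by_cases h2 : x ∈ Omega
      · exact Or.inl ⟨⟨hx, h1⟩, h2⟩
      · exact Or.inr (Or.inr h2)
    have h0 : 0 < μ (Metric.ball x₀ r) :=
      hx₀supp _ Metric.isOpen_ball (Metric.mem_ball_self hrpos)
    have hle : μ (Metric.ball x₀ r) ≤ μ ((Metric.ball x₀ r \ V) ∩ Omega) + μ (V ∪ Omegaᶜ) :=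
      (measure_mono hsub).trans (measure_union_le _ _)
    rw [measure_union_null hV hμΩ, add_zero] at hle
    exact lt_of_lt_of_le h0 hle
  have hJtop : J < ⊤ := by
    refine lt_of_le_of_lt ?_ hμp
    rw [hJ]; unfold Pers
    refine lintegral_mono fun x => ?_
    refine ENNReal.ofReal_le_ofReal (Real.rpow_le_rpow (mmin_nonneg k c x) ?_ hp0)
    rw [← cdistC_last k c x]
    exact mmin_le k c (Fin.last k) x
  have hIJ : I < J := by
    have hIle : I ≤ J := le_trans (le_add_right le_rfl) hIind
    have hInt : I ≠ ⊤ := (lt_of_le_of_lt hIle hJtop).ne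
    have hne0 : ENNReal.ofReal (r ^ p) * μ ((Metric.ball x₀ r \ V) ∩ Omega) ≠ 0 := by
      refine mul_ne_zero ?_ hballpos.ne'
      simp only [ne_eq, ENNReal.ofReal_eq_zero, not_le]
      positivity
    calc I < I + ENNReal.ofReal (r ^ p) * μ ((Metric.ball x₀ r \ V) ∩ Omega) :=
          ENNReal.lt_add_right hInt hne0
      _ = I + ∫⁻ x in Omega, ind x ∂μ := by rw [hindval]
      _ ≤ J := hIind
  have hdist : distortion p μ k c' < distortion p μ k c := by
    rw [distortion_eq, distortion_eq]
    exact ENNReal.rpow_lt_rpow hIJ (by positivity)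
  refine lt_of_le_of_lt ?_ hdist
  exact iInf_le_of_le c' (iInf_le_of_le hc' le_rfl)

end St6Aux

/-- Lemma: a codebook with an empty cell is not optimal.
If `μ` has at least `k` support points and `μ(V_j(c)) = 0` for some `1 ≤ j ≤ k`, then
`R_{k,p}(c) > R_k^*`; consequently a codebook with two equal centroids or with a centroid on
the diagonal is not optimal. -/
theorem statement6 (p : ℝ) (hp : 1 ≤ p) (k : ℕ) (hk : 1 ≤ k) (μ : Measure E2)
    (hμΩ : μ Omegaᶜ = 0) (hμp : Pers p μ < ⊤)
    (hsupp : ∃ s : Finset E2, s.card = k ∧ ↑s ⊆ msupport μ) :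
    (∀ c : Fin k → E2, (∀ j, c j ∈ OmegaBar) →
      (∃ j : Fin k, μ (Vcell k c j.castSucc) = 0) →
      Rstar p μ k < distortion p μ k c) ∧
    (∀ c : Fin k → E2, (∀ j, c j ∈ OmegaBar) →
      ((∃ j j' : Fin k, j ≠ j' ∧ c j = c j') ∨ (∃ j : Fin k, c j ∈ diagSet)) →
      Rstar p μ k < distortion p μ k c) := by
  constructor
  · rintro c hc ⟨j, hVj⟩
    exact St6Aux.key p hp k hk μ hμΩ hμp hsupp c hc j hVj
  · rintro c hc (⟨j, j', hne, heq⟩ | ⟨j, hdiag⟩)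
    · rcases hne.lt_or_gt with h | h
      · refine St6Aux.key p hp k hk μ hμΩ hμp hsupp c hc j ?_
        rw [St6Aux.Vcell_empty_of_eq h heq]; exact measure_empty
      · refine St6Aux.key p hp k hk μ hμΩ hμp hsupp c hc j' ?_
        rw [St6Aux.Vcell_empty_of_eq h heq.symm]; exact measure_empty
    · refine St6Aux.key p hp k hk μ hμΩ hμp hsupp c hc j ?_
      rw [St6Aux.Vcell_empty_of_diag hdiag]; exact measure_empty

end
end
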